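/- Let A be a Banach synaptic algebra (a norm-complete synaptic algebra) and let (p_λ)_{λ∈ℝ} be a bounded resolution of identity in A. Then the Riemann–Stieltjes sums for ∫_{−K}^{K} λ dp_λ converge in norm to an element a ∈ A such that ‖a‖ ≤ K and (p_λ)_{λ∈ℝ} is the spectral resolution of a (i.e., p_λ = p_{a,λ} for all λ ∈ ℝ). -/

import Mathlib

open Filter Topology

/-- The order-unit norm associated with an order relation `le` on a real algebra:
`‖a‖ = inf {λ > 0 : −λ ≤ a ≤ λ}`. -/
noncomputable def ouNorm {R : Type*} [Ring R] [Algebra ℝ R] (le : R → R → Prop) (a : R) : ℝ :=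
  sInf {l : ℝ | 0 < l ∧ le (algebraMap ℝ R (-l)) a ∧ le a (algebraMap ℝ R l)}

/-- A synaptic algebra: a real linear subspace `A` (containing `1`) of a unital associative
algebra `R` over `ℝ` (a complex algebra is in particular a real algebra), equipped with a
partial order making it an Archimedean partially ordered real linear space with order unit `1`,
and satisfying axioms SA1–SA8.  The square root (SA5) and the carrier (SA6) are bundled as
data together with their defining properties. -/
structure SynapticAlgebra (R : Type*) [Ring R] [Algebra ℝ R] where
  A : Submodule ℝ R
  one_mem : (1 : R) ∈ A
  /-- the synaptic order (meaningful on elements of `A`) -/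
  le : R → R → Prop
  -- SA1 : Archimedean partially ordered real linear space with order unit 1
  le_refl : ∀ a ∈ A, le a a
  le_antisymm : ∀ a ∈ A, ∀ b ∈ A, le a b → le b a → a = b
  le_trans : ∀ a ∈ A, ∀ b ∈ A, ∀ c ∈ A, le a b → le b c → le a c
  add_le_add_right : ∀ a ∈ A, ∀ b ∈ A, ∀ c ∈ A, le a b → le (a + c) (b + c)
  smul_nonneg : ∀ r : ℝ, 0 ≤ r → ∀ a ∈ A, le 0 a → le 0 (r • a)
  arch : ∀ a ∈ A, ∀ b ∈ A, (∀ n : ℕ, le ((n : ℝ) • a) b) → le a 0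
  one_order_unit : ∀ a ∈ A, ∃ n : ℕ, le a ((n : ℝ) • (1 : R))
  zero_ne_one : (0 : R) ≠ 1
  -- SA2
  sq_mem : ∀ a ∈ A, a * a ∈ A
  sq_nn : ∀ a ∈ A, le 0 (a * a)
  -- SA3
  quad_mem : ∀ a ∈ A, ∀ b ∈ A, a * b * a ∈ A
  quad_nn : ∀ a ∈ A, ∀ b ∈ A, le 0 a → le 0 b → le 0 (a * b * a)
  -- SA4
  quad_zero : ∀ a ∈ A, ∀ b ∈ A, le 0 b → a * b * a = 0 → a * b = 0 ∧ b * a = 0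
  -- SA5 : square roots
  sqrt : R → R
  sqrt_mem : ∀ a ∈ A, le 0 a → sqrt a ∈ A
  sqrt_nn : ∀ a ∈ A, le 0 a → le 0 (sqrt a)
  sqrt_sq : ∀ a ∈ A, le 0 a → sqrt a * sqrt a = a
  sqrt_bicomm : ∀ a ∈ A, le 0 a → ∀ b ∈ A, a * b = b * a → sqrt a * b = b * sqrt a
  sqrt_unique : ∀ a ∈ A, le 0 a → ∀ b ∈ A, le 0 b → b * b = a →
    (∀ c ∈ A, a * c = c * a → b * c = c * b) → b = sqrt a
  -- SA6 : carriers
  carr : R → R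
  carr_mem : ∀ a ∈ A, carr a ∈ A
  carr_idem : ∀ a ∈ A, carr a * carr a = carr a
  carr_spec : ∀ a ∈ A, ∀ b ∈ A, (a * b = 0 ↔ carr a * b = 0)
  -- SA7
  inv_exists : ∀ a ∈ A, le 1 a → ∃ b ∈ A, a * b = 1 ∧ b * a = 1
  -- SA8
  comm_closed : ∀ a ∈ A, ∀ b ∈ A, ∀ f : ℕ → R, (∀ n, f n ∈ A) →
    (∀ n, le (f n) (f (n + 1))) → (∀ m n, f m * f n = f n * f m) →
    (∀ n, f n * b = b * f n) →
    Filter.Tendsto (fun n => ouNorm le (a - f n)) Filter.atTop (nhds 0) →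
    a * b = b * a

namespace SynapticAlgebra

variable {R : Type*} [Ring R] [Algebra ℝ R] (S : SynapticAlgebra R)

/-- `|a| := (a²)^{1/2}`. -/
def absval (a : R) : R := S.sqrt (a * a)

/-- The positive part `a⁺ := (|a| + a)/2`. -/
noncomputable def pospart (a : R) : R := (2⁻¹ : ℝ) • (S.absval a + a)

/-- The spectral resolution `p_{a,λ} := 1 − ((a − λ)⁺)°`. -/
noncomputable def specProj (a : R) (l : ℝ) : R :=
  1 - S.carr (S.pospart (a - algebraMap ℝ R l))

/-- The spectral order: `a ≤ₛ b` iff `p_{b,λ} ≤ p_{a,λ}` for all real `λ`. -/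
noncomputable def specLE (a b : R) : Prop :=
  ∀ l : ℝ, S.le (S.specProj b l) (S.specProj a l)

/-- Projections of the synaptic algebra. -/
def IsProj (p : R) : Prop := p ∈ S.A ∧ p * p = p

/-- The set `E = {e ∈ A : 0 ≤ e ≤ 1}` of effects. -/
def effects : Set R := {e | e ∈ S.A ∧ S.le 0 e ∧ S.le e 1}

/-- `p` is the infimum of the set `T` in the orthomodular lattice `P` of projections. -/
def IsProjInf (p : R) (T : Set R) : Prop :=
  S.IsProj p ∧ (∀ q ∈ T, S.le p q) ∧ ∀ r, S.IsProj r → (∀ q ∈ T, S.le r q) → S.le r p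

/-- `p` is the supremum of the set `T` in the orthomodular lattice `P` of projections. -/
def IsProjSup (p : R) (T : Set R) : Prop :=
  S.IsProj p ∧ (∀ q ∈ T, S.le q p) ∧ ∀ r, S.IsProj r → (∀ q ∈ T, S.le q r) → S.le p r

/-- A Banach (norm-complete) synaptic algebra: every Cauchy sequence in `A`
(w.r.t. the order-unit norm) converges in norm to an element of `A`. -/
noncomputable def IsBanach : Prop :=
  ∀ f : ℕ → R, (∀ n, f n ∈ S.A) →
    (∀ ε : ℝ, 0 < ε → ∃ N : ℕ, ∀ m ≥ N, ∀ n ≥ N, ouNorm S.le (f m - f n) < ε) →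
    ∃ a ∈ S.A, Filter.Tendsto (fun n => ouNorm S.le (a - f n)) Filter.atTop (nhds 0)

/-- The `λ`-eigenprojection `d_{a,λ} := 1 − (a − λ)°`. -/
noncomputable def eigenProj (a : R) (l : ℝ) : R := 1 - S.carr (a - algebraMap ℝ R l)

/-- The bicommutant `CC(a)` (within `A`). -/
def Bicomm (a : R) : Set R :=
  {b | b ∈ S.A ∧ ∀ c ∈ S.A, a * c = c * a → b * c = c * b}

/-- Projections `p` and `q` are exchanged by a symmetry (`s² = 1`, `sps = q`). -/
def ExchBySymm (p q : R) : Prop := ∃ s ∈ S.A, s * s = 1 ∧ s * p * s = q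

/-- The dimension equivalence on projections: a finite chain of projections, consecutive
ones exchanged by symmetries. -/
def DimEquiv (p q : R) : Prop :=
  ∃ (n : ℕ) (c : ℕ → R), c 0 = p ∧ c n = q ∧ (∀ i ≤ n, S.IsProj (c i)) ∧
    ∀ i < n, S.ExchBySymm (c i) (c (i + 1))

/-- `A` is of finite type iff every projection is finite. -/
def FiniteType : Prop :=
  ∀ p, S.IsProj p → ∀ q, S.IsProj q → S.DimEquiv q p → S.le q p → q = p

/-- The projection lattice `P` is a complete orthomodular lattice: every set of projections
has an infimum and a supremum in `P`. -/
def ProjComplete : Prop :=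
  ∀ T : Set R, (∀ p ∈ T, S.IsProj p) →
    (∃ q, S.IsProjInf q T) ∧ (∃ q, S.IsProjSup q T)

/-- A bounded resolution of identity with bound `K`. -/
def IsBoundedResId (p : ℝ → R) (K : ℝ) : Prop :=
  0 ≤ K ∧ (∀ l, S.IsProj (p l)) ∧
  (∀ l, l < -K → p l = 0) ∧ (∀ l, K ≤ l → p l = 1) ∧
  (∀ l l', l ≤ l' → S.le (p l) (p l')) ∧
  (∀ l, S.IsProjInf (p l) {x | ∃ l' > l, x = p l'})

end SynapticAlgebra

/-- `c` is a regular involution on the subset `T` of the poset `(T, le')`. -/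
def IsRegInvPoset {R : Type*} (le' : R → R → Prop) (T : Set R) (c : R → R) : Prop :=
  (∀ a ∈ T, c a ∈ T) ∧ (∀ a ∈ T, c (c a) = a) ∧
  (∀ a ∈ T, ∀ b ∈ T, le' a b → le' (c b) (c a)) ∧
  (∀ a ∈ T, ∀ b ∈ T, le' a (c a) → le' b (c b) → le' a (c b))

/-- `(T, le', c, 0, 1)` is a Kleene poset: a bounded poset with a regular involution. -/
def IsKleene {R : Type*} [Zero R] [One R] (le' : R → R → Prop) (T : Set R) (c : R → R) : Prop :=
  IsRegInvPoset le' T c ∧ (0 : R) ∈ T ∧ (1 : R) ∈ T ∧ ∀ a ∈ T, le' 0 a ∧ le' a 1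

/-- Every pair of elements of `T` has an infimum and a supremum in `(T, le')`. -/
def HasBinSupInf {R : Type*} (le' : R → R → Prop) (T : Set R) : Prop :=
  ∀ a ∈ T, ∀ b ∈ T,
    (∃ m ∈ T, le' m a ∧ le' m b ∧ ∀ x ∈ T, le' x a → le' x b → le' x m) ∧
    (∃ j ∈ T, le' a j ∧ le' b j ∧ ∀ x ∈ T, le' a x → le' b x → le' j x)

namespace SynapticAlgebra
variable {R : Type*} [Ring R] [Algebra ℝ R] (S : SynapticAlgebra R)

/-- nonneg -/
def nn (x : R) : Prop := S.le 0 x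

variable {S}

lemma smul_one_mem (r : ℝ) : (r • (1:R)) ∈ S.A := S.A.smul_mem r S.one_mem

lemma algebraMap_mem (r : ℝ) : (algebraMap ℝ R r) ∈ S.A := by
  rw [Algebra.algebraMap_eq_smul_one]; exact smul_one_mem r

lemma le_iff_sub {x y : R} (hx : x ∈ S.A) (hy : y ∈ S.A) :
    S.le x y ↔ S.nn (y - x) := by
  constructor
  · intro h
    have := S.add_le_add_right x hx y hy (-x) (S.A.neg_mem hx) h
    simpa [sub_eq_add_neg, nn] using this
  · intro h
    have := S.add_le_add_right 0 (S.A.zero_mem) (y - x) (S.A.sub_mem hy hx) x hx h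
    simpa [sub_eq_add_neg] using this

lemma nn_add {x y : R} (hx : x ∈ S.A) (hy : y ∈ S.A) (h1 : S.nn x) (h2 : S.nn y) :
    S.nn (x + y) := by
  have h3 : S.le y (x + y) := by
    have := S.add_le_add_right 0 S.A.zero_mem x hx y hy h1
    simpa [add_comm] using this
  exact S.le_trans 0 S.A.zero_mem y hy (x+y) (S.A.add_mem hx hy) h2 h3

lemma add_le_add' {x y z w : R} (hx : x ∈ S.A) (hy : y ∈ S.A) (hz : z ∈ S.A) (hw : w ∈ S.A)
    (h1 : S.le x y) (h2 : S.le z w) : S.le (x + z) (y + w) := by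
  rw [le_iff_sub (S.A.add_mem hx hz) (S.A.add_mem hy hw)]
  have e : y + w - (x + z) = (y - x) + (w - z) := by abel
  rw [e]
  exact nn_add (S.A.sub_mem hy hx) (S.A.sub_mem hw hz)
    ((le_iff_sub hx hy).1 h1) ((le_iff_sub hz hw).1 h2)

lemma nn_one : S.nn (1 : R) := by
  have := S.sq_nn 1 S.one_mem; simpa [sub_eq_add_neg, nn] using this

lemma nn_smul {r : ℝ} (hr : 0 ≤ r) {x : R} (hx : x ∈ S.A) (h : S.nn x) : S.nn (r • x) :=
  S.smul_nonneg r hr x hx h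

lemma nn_smul_one {r : ℝ} (hr : 0 ≤ r) : S.nn (r • (1:R)) :=
  nn_smul hr S.one_mem nn_one

lemma le_smul_one {r s : ℝ} (h : r ≤ s) : S.le (r • (1:R)) (s • (1:R)) := by
  rw [le_iff_sub (smul_one_mem r) (smul_one_mem s), ← sub_smul]
  exact nn_smul_one (by linarith)

lemma smul_le_smul {r : ℝ} (hr : 0 ≤ r) {x y : R} (hx : x ∈ S.A) (hy : y ∈ S.A)
    (h : S.le x y) : S.le (r • x) (r • y) := by
  rw [le_iff_sub (S.A.smul_mem r hx) (S.A.smul_mem r hy), ← smul_sub]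
  exact nn_smul hr (S.A.sub_mem hy hx) ((le_iff_sub hx hy).1 h)

/-- Archimedean: if `x ≤ ε•1` for all positive `ε` then `x ≤ 0`. -/
lemma le_zero_of_forall_eps {x : R} (hx : x ∈ S.A)
    (h : ∀ ε : ℝ, 0 < ε → S.le x (ε • (1:R))) : S.le x 0 := by
  apply S.arch x hx 1 S.one_mem
  intro n
  rcases Nat.eq_zero_or_pos n with h0 | h0
  · subst h0; simpa [nn] using nn_one (S := S)
  · have hn : (0:ℝ) < n := by exact_mod_cast h0
    have h1 := h ((n:ℝ)⁻¹) (by positivity)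
    have := smul_le_smul (le_of_lt hn) hx (smul_one_mem _) h1
    rwa [smul_smul, mul_inv_cancel₀ (ne_of_gt hn), one_smul] at this

lemma le_of_forall_eps {x y : R} (hx : x ∈ S.A) (hy : y ∈ S.A)
    (h : ∀ ε : ℝ, 0 < ε → S.le x (y + ε • (1:R))) : S.le x y := by
  have h2 : S.le (x - y) 0 := by
    apply le_zero_of_forall_eps (S.A.sub_mem hx hy)
    intro ε hε
    rw [le_iff_sub (S.A.sub_mem hx hy) (smul_one_mem ε)]
    have := (le_iff_sub hx (S.A.add_mem hy (smul_one_mem ε))).1 (h ε hε)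
    have e : y + ε • (1:R) - x = ε • (1:R) - (x - y) := by abel
    rwa [e] at this
  have := (le_iff_sub (S.A.sub_mem hx hy) S.A.zero_mem).1 h2
  rw [le_iff_sub hx hy]
  simpa [sub_eq_add_neg] using this

lemma nn_of_forall_eps {x : R} (hx : x ∈ S.A)
    (h : ∀ ε : ℝ, 0 < ε → S.nn (x + ε • (1:R))) : S.nn x := by
  have : S.le (-x) 0 := by
    apply le_zero_of_forall_eps (S.A.neg_mem hx)
    intro ε hε
    rw [le_iff_sub (S.A.neg_mem hx) (smul_one_mem ε)]
    have := h ε hε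
    simpa [sub_neg_eq_add, add_comm] using this
  have := (le_iff_sub (S.A.neg_mem hx) S.A.zero_mem).1 this
  simpa [sub_eq_add_neg] using this

end SynapticAlgebra
namespace SynapticAlgebra
variable {R : Type*} [Ring R] [Algebra ℝ R] {S : SynapticAlgebra R}

/-- the set defining the order-unit norm -/
def nbSet (S : SynapticAlgebra R) (x : R) : Set ℝ :=
  {l : ℝ | 0 < l ∧ S.le (algebraMap ℝ R (-l)) x ∧ S.le x (algebraMap ℝ R l)}

lemma ouNorm_eq (x : R) : ouNorm S.le x = sInf (nbSet S x) := rfl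

lemma nbSet_up {x : R} (hx : x ∈ S.A) {l l' : ℝ} (hl : l ∈ nbSet S x) (h : l ≤ l') :
    l' ∈ nbSet S x := by
  obtain ⟨h0, h1, h2⟩ := hl
  refine ⟨lt_of_lt_of_le h0 h, ?_, ?_⟩
  · refine S.le_trans _ (algebraMap_mem _) _ (algebraMap_mem _) _ hx ?_ h1
    rw [Algebra.algebraMap_eq_smul_one, Algebra.algebraMap_eq_smul_one]
    exact le_smul_one (by linarith)
  · refine S.le_trans _ hx _ (algebraMap_mem _) _ (algebraMap_mem _) h2 ?_
    rw [Algebra.algebraMap_eq_smul_one, Algebra.algebraMap_eq_smul_one]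
    exact le_smul_one h

lemma nbSet_nonempty {x : R} (hx : x ∈ S.A) : (nbSet S x).Nonempty := by
  obtain ⟨n, hn⟩ := S.one_order_unit x hx
  obtain ⟨m, hm⟩ := S.one_order_unit (-x) (S.A.neg_mem hx)
  refine ⟨(n:ℝ) + m + 1, by positivity, ?_, ?_⟩
  · rw [Algebra.algebraMap_eq_smul_one]
    have h1 : S.le (-((n:ℝ)+m+1) • (1:R)) (-(m:ℝ) • (1:R)) := le_smul_one (by push_cast; linarith)
    refine S.le_trans _ (smul_one_mem _) _ (smul_one_mem _) _ hx h1 ?_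
    rw [le_iff_sub (smul_one_mem _) hx]
    have := (le_iff_sub (S.A.neg_mem hx) (smul_one_mem (m:ℝ))).1 hm
    have e : (m:ℝ) • (1:R) - -x = x - (-(m:ℝ)) • (1:R) := by
      simp [sub_neg_eq_add, neg_smul]; abel
    rwa [e] at this
  · rw [Algebra.algebraMap_eq_smul_one]
    refine S.le_trans _ hx _ (smul_one_mem (n:ℝ)) _ (smul_one_mem _) hn (le_smul_one (by linarith))

lemma nbSet_bddBelow (x : R) : BddBelow (nbSet S x) :=
  ⟨0, fun l hl => le_of_lt hl.1⟩

lemma ouNorm_nonneg {x : R} (hx : x ∈ S.A) : 0 ≤ ouNorm S.le x :=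
  le_csInf (nbSet_nonempty hx) (fun l hl => le_of_lt hl.1)

lemma ouNorm_le_of_bounds {x : R} (hx : x ∈ S.A) {c : ℝ}
    (h1 : S.le ((-c) • (1:R)) x) (h2 : S.le x (c • (1:R))) : ouNorm S.le x ≤ c := by
  apply le_of_forall_pos_le_add
  intro ε hε
  apply csInf_le (nbSet_bddBelow x)
  have hc : 0 ≤ c := by
    by_contra hneg
    push_neg at hneg
    have h3 : S.le ((-c) • (1:R)) (c • (1:R)) :=
      S.le_trans _ (smul_one_mem _) _ hx _ (smul_one_mem _) h1 h2
    have h4 : S.nn ((c - -c) • (1:R)) := by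
      have := (le_iff_sub (smul_one_mem (-c)) (smul_one_mem c)).1 h3
      rwa [← sub_smul] at this
    have h5 : S.nn ((-1 : ℝ) • (1:R)) := by
      have := nn_smul (r := -(c - -c)⁻¹) (by
        have h2c : c - -c < 0 := by linarith
        have := inv_neg''.2 h2c
        linarith) (smul_one_mem _) h4
      rwa [smul_smul, show -(c - -c)⁻¹ * (c - -c) = -1 by
        field_simp
        rw [div_self (ne_of_lt hneg)]] at this
    have h6 : S.le ((-1 : ℝ) • (1:R)) 0 := by
      rw [le_iff_sub (smul_one_mem _) S.A.zero_mem]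
      have : (0:R) - (-1:ℝ) • (1:R) = 1 := by rw [neg_smul, one_smul]; abel
      rw [this]; exact nn_one
    have h7 := S.le_antisymm 0 S.A.zero_mem _ (smul_one_mem (-1:ℝ)) h5 h6
    have h8 : (1:R) = 0 := by
      have := congrArg (fun z => (-1:ℝ) • z) h7
      simpa using this.symm
    exact S.zero_ne_one h8.symm
  refine ⟨by linarith, ?_, ?_⟩
  · rw [Algebra.algebraMap_eq_smul_one]
    refine S.le_trans _ (smul_one_mem _) _ (smul_one_mem _) _ hx (le_smul_one (by linarith)) h1
  · rw [Algebra.algebraMap_eq_smul_one]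
    refine S.le_trans _ hx _ (smul_one_mem _) _ (smul_one_mem _) h2 (le_smul_one (by linarith))

lemma bounds_of_ouNorm_lt {x : R} (hx : x ∈ S.A) {c : ℝ} (h : ouNorm S.le x < c) :
    S.le ((-c) • (1:R)) x ∧ S.le x (c • (1:R)) := by
  obtain ⟨l, hl, hlc⟩ := exists_lt_of_csInf_lt (nbSet_nonempty hx) h
  have := nbSet_up hx hl (le_of_lt hlc)
  obtain ⟨h0, h1, h2⟩ := this
  rw [Algebra.algebraMap_eq_smul_one] at h1 h2
  exact ⟨h1, h2⟩

lemma ouNorm_smul_one_le (r : ℝ) : ouNorm S.le (r • (1:R)) ≤ |r| := by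
  apply ouNorm_le_of_bounds (smul_one_mem r)
  · exact le_smul_one (neg_abs_le r)
  · exact le_smul_one (le_abs_self r)

lemma ouNorm_triangle {x y : R} (hx : x ∈ S.A) (hy : y ∈ S.A) :
    ouNorm S.le (x + y) ≤ ouNorm S.le x + ouNorm S.le y := by
  apply le_of_forall_pos_le_add
  intro ε hε
  obtain ⟨h1, h2⟩ := bounds_of_ouNorm_lt hx (show ouNorm S.le x < ouNorm S.le x + ε/2 by linarith)
  obtain ⟨h3, h4⟩ := bounds_of_ouNorm_lt hy (show ouNorm S.le y < ouNorm S.le y + ε/2 by linarith)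
  have hb := ouNorm_le_of_bounds (S.A.add_mem hx hy)
    (c := ouNorm S.le x + ε/2 + (ouNorm S.le y + ε/2)) ?_ ?_
  · linarith
  · have := add_le_add' (smul_one_mem _) hx (smul_one_mem _) hy h1 h3
    rwa [← add_smul, show -(ouNorm S.le x + ε/2) + -(ouNorm S.le y + ε/2)
      = -(ouNorm S.le x + ε/2 + (ouNorm S.le y + ε/2)) by ring] at this
  · have := add_le_add' hx (smul_one_mem _) hy (smul_one_mem _) h2 h4
    rwa [← add_smul] at this

lemma ouNorm_neg {x : R} (hx : x ∈ S.A) : ouNorm S.le (-x) = ouNorm S.le x := by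
  have key : ∀ y ∈ S.A, ∀ l : ℝ, l ∈ nbSet S y → l ∈ nbSet S (-y) := by
    intro y hy l hl
    obtain ⟨h0, h1, h2⟩ := hl
    rw [Algebra.algebraMap_eq_smul_one] at h1 h2
    refine ⟨h0, ?_, ?_⟩
    · rw [Algebra.algebraMap_eq_smul_one, le_iff_sub (smul_one_mem _) (S.A.neg_mem hy)]
      have := (le_iff_sub hy (smul_one_mem l)).1 h2
      have e : l • (1:R) - y = -y - (-l) • (1:R) := by rw [neg_smul]; abel
      rwa [e] at this
    · rw [Algebra.algebraMap_eq_smul_one, le_iff_sub (S.A.neg_mem hy) (smul_one_mem _)]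
      have := (le_iff_sub (smul_one_mem (-l)) hy).1 h1
      have e : y - (-l) • (1:R) = l • (1:R) - -y := by rw [neg_smul]; abel
      rwa [e] at this
  have hset : nbSet S (-x) = nbSet S x := by
    ext l
    constructor
    · intro hl
      have := key (-x) (S.A.neg_mem hx) l hl
      simpa using this
    · intro hl; exact key x hx l hl
  rw [ouNorm_eq, ouNorm_eq, hset]

end SynapticAlgebra
namespace SynapticAlgebra
variable {R : Type*} [Ring R] [Algebra ℝ R] {S : SynapticAlgebra R}

lemma mul_mem_of_comm {x y : R} (hx : x ∈ S.A) (hy : y ∈ S.A) (h : x * y = y * x) :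
    x * y ∈ S.A := by
  have e : x * y = (2⁻¹ : ℝ) • ((x + y) * (x + y) - x * x - y * y) := by
    have : (x + y) * (x + y) = x * x + (x * y + x * y) + y * y := by
      rw [add_mul, mul_add, mul_add, ← h]; abel
    rw [this]
    rw [show x*x + (x*y + x*y) + y*y - x*x - y*y = x*y + x*y by abel]
    rw [← two_smul ℝ (x*y), smul_smul]
    norm_num
  rw [e]
  exact S.A.smul_mem _ (S.A.sub_mem (S.A.sub_mem (S.sq_mem _ (S.A.add_mem hx hy)) (S.sq_mem _ hx)) (S.sq_mem _ hy))

lemma nn_antisymm {x : R} (hx : x ∈ S.A) (h1 : S.nn x) (h2 : S.le x 0) : x = 0 :=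
  (S.le_antisymm 0 S.A.zero_mem x hx h1 h2).symm

lemma nn_proj {q : R} (hq : S.IsProj q) : S.nn q := by
  have := S.sq_nn q hq.1; rwa [hq.2] at this

lemma isProj_one : S.IsProj (1 : R) := ⟨S.one_mem, by simp⟩

lemma isProj_zero : S.IsProj (0 : R) := ⟨S.A.zero_mem, by simp⟩

lemma isProj_compl {q : R} (hq : S.IsProj q) : S.IsProj (1 - q) := by
  refine ⟨S.A.sub_mem S.one_mem hq.1, ?_⟩
  simp only [sub_mul, mul_sub, one_mul, mul_one, hq.2]
  abel

lemma proj_le_one {q : R} (hq : S.IsProj q) : S.le q 1 := by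
  rw [le_iff_sub hq.1 S.one_mem]
  exact nn_proj (isProj_compl hq)

/-- orthogonality is symmetric for projections -/
lemma proj_orth_symm {e q : R} (he : e ∈ S.A) (hq : S.IsProj q) (h : e * q = 0) :
    q * e = 0 := by
  have h1 : e * q * e = 0 := by rw [h, zero_mul]
  exact ((S.quad_zero e he q hq.1 (nn_proj hq) h1).2)

/-- comparable projections commute and multiply to the smaller one -/
lemma proj_le_mul {p q : R} (hp : S.IsProj p) (hq : S.IsProj q) (h : S.le p q) :
    q * p = p ∧ p * q = p := by
  set x := 1 - q with hxdef
  have hxproj : S.IsProj x := isProj_compl hq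
  have hxpx_nn : S.nn (x * p * x) := S.quad_nn x hxproj.1 p hp.1 (nn_proj hxproj) (nn_proj hp)
  have hxqx : x * q * x = 0 := by
    rw [hxdef]
    rw [sub_mul, one_mul, hq.2, sub_self, zero_mul]
  have hle : S.le (x * p * x) (x * q * x) := by
    rw [le_iff_sub (S.quad_mem x hxproj.1 p hp.1) (S.quad_mem x hxproj.1 q hq.1)]
    have e : x * q * x - x * p * x = x * (q - p) * x := by noncomm_ring
    rw [e]
    exact S.quad_nn x hxproj.1 (q - p) (S.A.sub_mem hq.1 hp.1) (nn_proj hxproj)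
      ((le_iff_sub hp.1 hq.1).1 h)
  have hzero : x * p * x = 0 := by
    apply nn_antisymm (S.quad_mem x hxproj.1 p hp.1) hxpx_nn
    rw [← hxqx]; exact hle
  have := S.quad_zero x hxproj.1 p hp.1 (nn_proj hp) hzero
  constructor
  · have h2 := this.2  -- p * x = 0
    rw [hxdef, mul_sub, mul_one, sub_eq_zero] at h2
    -- p = p * q ... careful: p * (1 - q) = 0 gives p = p*q
    have h3 := this.1  -- x * p = 0
    rw [hxdef, sub_mul, one_mul, sub_eq_zero] at h3
    exact h3.symm
  · have h2 := this.2
    rw [hxdef, mul_sub, mul_one, sub_eq_zero] at h2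
    exact h2.symm

lemma proj_le_of_mul {p q : R} (hp : S.IsProj p) (hq : S.IsProj q)
    (h1 : q * p = p) (h2 : p * q = p) : S.le p q := by
  have hproj : S.IsProj (q - p) := by
    refine ⟨S.A.sub_mem hq.1 hp.1, ?_⟩
    rw [sub_mul, mul_sub, mul_sub, hq.2, hp.2, h1, h2]
    abel
  rw [le_iff_sub hp.1 hq.1]
  exact nn_proj hproj

/-- conjugation by a projection contracts the norm; for commuting x, q this bounds x*q -/
lemma ouNorm_mul_proj_le {x q : R} (hx : x ∈ S.A) (hq : S.IsProj q) (hcomm : x * q = q * x) :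
    ouNorm S.le (x * q) ≤ ouNorm S.le x := by
  have hmem : x * q ∈ S.A := mul_mem_of_comm hx hq.1 hcomm
  apply le_of_forall_pos_le_add
  intro ε hε
  obtain ⟨h1, h2⟩ := bounds_of_ouNorm_lt hx (show ouNorm S.le x < ouNorm S.le x + ε by linarith)
  set c := ouNorm S.le x + ε with hc
  have hcpos : 0 ≤ c := by have := ouNorm_nonneg hx; linarith
  have key : ∀ y ∈ S.A, S.le y (c • (1:R)) → S.le (q * y * q) (c • q) := by
    intro y hy hle
    have hnn : S.nn (q * (c • (1:R) - y) * q) :=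
      S.quad_nn q hq.1 _ (S.A.sub_mem (smul_one_mem c) hy) (nn_proj hq)
        ((le_iff_sub hy (smul_one_mem c)).1 hle)
    rw [le_iff_sub (S.quad_mem q hq.1 y hy) (S.A.smul_mem c hq.1)]
    have e : c • q - q * y * q = q * (c • (1:R) - y) * q := by
      rw [mul_sub, sub_mul, mul_smul_comm, smul_mul_assoc, mul_one, hq.2]
    rw [e]; exact hnn
  have hxqq : q * x * q = x * q := by
    rw [← hcomm, mul_assoc, hq.2]
  have hub : S.le (x * q) (c • (1:R)) := by
    have := key x hx h2
    rw [hxqq] at this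
    refine S.le_trans _ hmem _ (S.A.smul_mem c hq.1) _ (smul_one_mem c) this ?_
    exact smul_le_smul hcpos hq.1 S.one_mem (proj_le_one hq)
  have hlb : S.le ((-c) • (1:R)) (x * q) := by
    have h1' : S.le (-x) (c • (1:R)) := by
      rw [le_iff_sub (S.A.neg_mem hx) (smul_one_mem c)]
      have := (le_iff_sub (smul_one_mem (-c)) hx).1 h1
      have e : x - (-c) • (1:R) = c • (1:R) - -x := by rw [neg_smul]; abel
      rwa [e] at this
    have := key (-x) (S.A.neg_mem hx) h1'
    have e2 : q * (-x) * q = -(x * q) := by rw [mul_neg, neg_mul, hxqq]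
    rw [e2] at this
    have h3 : S.le (-(x*q)) (c • (1:R)) :=
      S.le_trans _ (S.A.neg_mem hmem) _ (S.A.smul_mem c hq.1) _ (smul_one_mem c) this
        (smul_le_smul hcpos hq.1 S.one_mem (proj_le_one hq))
    rw [le_iff_sub (smul_one_mem (-c)) hmem]
    have := (le_iff_sub (S.A.neg_mem hmem) (smul_one_mem c)).1 h3
    have e3 : c • (1:R) - -(x * q) = x * q - (-c) • (1:R) := by rw [neg_smul]; abel
    rwa [e3] at this
  exact ouNorm_le_of_bounds hmem hlb hub

/-- sums of nonneg elements of A -/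
lemma nn_sum {n : ℕ} {f : ℕ → R} (hmem : ∀ i < n, f i ∈ S.A) (h : ∀ i < n, S.nn (f i)) :
    S.nn (∑ i ∈ Finset.range n, f i) := by
  induction n with
  | zero => simpa [nn] using S.le_refl 0 S.A.zero_mem
  | succ m ih =>
    rw [Finset.sum_range_succ]
    exact nn_add (S.A.sum_mem (fun i hi => hmem i (by
      have := Finset.mem_range.1 hi; omega))) (hmem m (by omega))
      (ih (fun i hi => hmem i (by omega)) (fun i hi => h i (by omega))) (h m (by omega))

lemma sum_le_sum {n : ℕ} {f g : ℕ → R} (hf : ∀ i < n, f i ∈ S.A) (hg : ∀ i < n, g i ∈ S.A)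
    (h : ∀ i < n, S.le (f i) (g i)) :
    S.le (∑ i ∈ Finset.range n, f i) (∑ i ∈ Finset.range n, g i) := by
  have hfm : (∑ i ∈ Finset.range n, f i) ∈ S.A :=
    S.A.sum_mem (fun i hi => hf i (Finset.mem_range.1 hi))
  have hgm : (∑ i ∈ Finset.range n, g i) ∈ S.A :=
    S.A.sum_mem (fun i hi => hg i (Finset.mem_range.1 hi))
  rw [le_iff_sub hfm hgm, ← Finset.sum_sub_distrib]
  exact nn_sum (fun i hi => S.A.sub_mem (hg i hi) (hf i hi))
    (fun i hi => (le_iff_sub (hf i hi) (hg i hi)).1 (h i hi))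

end SynapticAlgebra
namespace SynapticAlgebra
variable {R : Type*} [Ring R] [Algebra ℝ R] {S : SynapticAlgebra R}
variable {p : ℝ → R} {K : ℝ}

lemma resId_mul (hp : S.IsBoundedResId p K) (s t : ℝ) :
    p s * p t = p (min s t) ∧ p t * p s = p (min s t) := by
  obtain ⟨hK, hproj, hlow, hhigh, hmono, hinf⟩ := hp
  rcases le_total s t with h | h
  · have := proj_le_mul (hproj s) (hproj t) (hmono s t h)
    rw [min_eq_left h]
    exact ⟨this.2, this.1⟩
  · have := proj_le_mul (hproj t) (hproj s) (hmono t s h)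
    rw [min_eq_right h]
    exact ⟨this.1, this.2⟩

lemma resId_comm (hp : S.IsBoundedResId p K) (s t : ℝ) : Commute (p s) (p t) := by
  have h := resId_mul hp s t
  show p s * p t = p t * p s
  rw [h.1, h.2]

/-- difference of resolution projections is a projection -/
lemma resId_diff_nn (hp : S.IsBoundedResId p K) {s t : ℝ} (h : s ≤ t) :
    S.nn (p t - p s) := by
  have := (le_iff_sub (hp.2.1 s).1 (hp.2.1 t).1).1 (hp.2.2.2.2.1 s t h)
  exact this

/-- Riemann–Stieltjes sum -/
noncomputable def RS (S : SynapticAlgebra R) (p : ℝ → R) (μ γ : ℕ → ℝ) (n : ℕ) : R :=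
  ∑ i ∈ Finset.range n, γ i • (p (μ (i + 1)) - p (μ i))

lemma RS_mem (hp : S.IsBoundedResId p K) (μ γ : ℕ → ℝ) (n : ℕ) : RS S p μ γ n ∈ S.A :=
  S.A.sum_mem (fun i _ => S.A.smul_mem _ (S.A.sub_mem (hp.2.1 _).1 (hp.2.1 _).1))

lemma RS_comm (hp : S.IsBoundedResId p K) (μ γ : ℕ → ℝ) (n : ℕ) (t : ℝ) :
    Commute (RS S p μ γ n) (p t) := by
  apply Commute.sum_left
  intro i _
  have h1 : Commute (p (μ (i+1)) - p (μ i)) (p t) :=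
    (resId_comm hp (μ (i+1)) t).sub_left (resId_comm hp (μ i) t)
  exact h1.smul_left (γ i)

lemma RS_comm_RS (hp : S.IsBoundedResId p K) (μ γ μ' γ' : ℕ → ℝ) (n n' : ℕ) :
    Commute (RS S p μ γ n) (RS S p μ' γ' n') := by
  apply Commute.sum_right
  intro i _
  exact (((RS_comm hp μ γ n (μ' (i+1))).sub_right (RS_comm hp μ γ n (μ' i))).smul_right (γ' i))

/-- a partition is valid for bound K and mesh h -/
def ValidPart (K h : ℝ) (μ γ : ℕ → ℝ) (n : ℕ) : Prop :=
  0 < n ∧ μ 0 < -K ∧ K ≤ μ n ∧ (∀ i < n, μ i < μ (i + 1)) ∧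
    (∀ i < n, μ (i + 1) - μ i ≤ h) ∧ (∀ i < n, μ i ≤ γ i ∧ γ i ≤ μ (i + 1))

lemma RS_telescope (hp : S.IsBoundedResId p K) {μ γ : ℕ → ℝ} {n : ℕ} {h : ℝ}
    (hP : ValidPart K h μ γ n) :
    ∑ i ∈ Finset.range n, (p (μ (i + 1)) - p (μ i)) = 1 := by
  rw [Finset.sum_range_sub (fun i => p (μ i))]
  rw [hp.2.2.2.1 (μ n) hP.2.2.1, hp.2.2.1 (μ 0) hP.2.1]
  abel

/-- termwise comparison of weighted sums against a constant weight from above -/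
lemma RS_le_const (hp : S.IsBoundedResId p K) {μ γ : ℕ → ℝ} {n : ℕ} {h : ℝ} (hh : 0 ≤ h)
    (hP : ValidPart K h μ γ n) :
    S.le (RS S p μ γ n) ((K + h) • (1:R)) ∧ S.le ((-(K + h)) • (1:R)) (RS S p μ γ n) := by
  obtain ⟨hK, hproj, hlow, hhigh, hmono, hinf⟩ := hp
  obtain ⟨hn, h0, hK', hm, hmesh, htag⟩ := hP
  have hdmem : ∀ i, p (μ (i+1)) - p (μ i) ∈ S.A := fun i => S.A.sub_mem (hproj _).1 (hproj _).1
  have hdnn : ∀ i < n, S.nn (p (μ (i+1)) - p (μ i)) := by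
    intro i hi
    exact resId_diff_nn ⟨hK, hproj, hlow, hhigh, hmono, hinf⟩ (le_of_lt (hm i hi))
  constructor
  · have step : ∀ i < n, S.le (γ i • (p (μ (i+1)) - p (μ i))) ((K + h) • (p (μ (i+1)) - p (μ i))) := by
      intro i hi
      rcases le_or_gt K (μ i) with hKi | hKi
      · have : p (μ (i+1)) - p (μ i) = 0 := by
          rw [hhigh (μ i) hKi, hhigh (μ (i+1)) (le_of_lt (lt_of_le_of_lt hKi (hm i hi))), sub_self]
        rw [this, smul_zero, smul_zero]
        exact S.le_refl 0 S.A.zero_mem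
      · have hγ : γ i ≤ K + h := by
          have := (htag i hi).2; have := hmesh i hi; linarith
        rw [le_iff_sub (S.A.smul_mem _ (hdmem i)) (S.A.smul_mem _ (hdmem i)), ← sub_smul]
        exact nn_smul (by linarith) (hdmem i) (hdnn i hi)
    have := sum_le_sum (n := n) (fun i _ => S.A.smul_mem _ (hdmem i))
      (fun i _ => S.A.smul_mem _ (hdmem i)) step
    rw [← Finset.smul_sum, RS_telescope ⟨hK, hproj, hlow, hhigh, hmono, hinf⟩
      ⟨hn, h0, hK', hm, hmesh, htag⟩] at this
    exact this
  · have step : ∀ i < n, S.le ((-(K + h)) • (p (μ (i+1)) - p (μ i))) (γ i • (p (μ (i+1)) - p (μ i))) := by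
      intro i hi
      rcases lt_or_ge (μ (i+1)) (-K) with hKi | hKi
      · have : p (μ (i+1)) - p (μ i) = 0 := by
          rw [hlow (μ (i+1)) hKi, hlow (μ i) (lt_trans (hm i hi) hKi), sub_self]
        rw [this, smul_zero, smul_zero]
        exact S.le_refl 0 S.A.zero_mem
      · have hγ : -(K + h) ≤ γ i := by
          have := (htag i hi).1; have := hmesh i hi; linarith
        rw [le_iff_sub (S.A.smul_mem _ (hdmem i)) (S.A.smul_mem _ (hdmem i)), ← sub_smul]
        exact nn_smul (by linarith) (hdmem i) (hdnn i hi)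
    have := sum_le_sum (n := n) (fun i _ => S.A.smul_mem _ (hdmem i))
      (fun i _ => S.A.smul_mem _ (hdmem i)) step
    rw [← Finset.smul_sum, RS_telescope ⟨hK, hproj, hlow, hhigh, hmono, hinf⟩
      ⟨hn, h0, hK', hm, hmesh, htag⟩] at this
    exact this

lemma RS_norm_le (hp : S.IsBoundedResId p K) {μ γ : ℕ → ℝ} {n : ℕ} {h : ℝ} (hh : 0 ≤ h)
    (hP : ValidPart K h μ γ n) : ouNorm S.le (RS S p μ γ n) ≤ K + h := by
  obtain ⟨h1, h2⟩ := RS_le_const hp hh hP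
  exact ouNorm_le_of_bounds (RS_mem hp μ γ n) h2 h1

end SynapticAlgebra
namespace SynapticAlgebra
variable {R : Type*} [Ring R] [Algebra ℝ R] {S : SynapticAlgebra R}
variable {p : ℝ → R} {K : ℝ}

lemma eRow_term (hp : S.IsBoundedResId p K) {a b s t : ℝ} (hab : a < b) (hst : s < t) :
    p (max (min b t) (max a s)) - p (max a s)
      = p (max a (min b t)) - p (max a (min b s)) := by
  rcases le_or_gt t a with ht | ht
  · have e1 : max (min b t) (max a s) = max a s :=
      max_eq_right (_root_.le_trans (min_le_right b t) (_root_.le_trans ht (le_max_left a s)))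
    have e2 : max a (min b t) = a := max_eq_left (_root_.le_trans (min_le_right _ _) ht)
    have e3 : max a (min b s) = a := max_eq_left (_root_.le_trans (min_le_right _ _) (by linarith))
    rw [e1, e2, e3, sub_self, sub_self]
  · rcases le_or_gt b s with hs | hs
    · have e1 : min b t = b := min_eq_left (by linarith)
      have e2 : max a s = s := max_eq_right (by linarith)
      have e4 : max b s = s := max_eq_right hs
      have e5 : max a b = b := max_eq_right (le_of_lt hab)
      have e6 : min b s = b := min_eq_left hs
      rw [e1, e2, e4, e6, e5, sub_self, sub_self]
    · -- overlap
      have hm0 : max a s < min b t := by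
        rw [max_lt_iff, lt_min_iff, lt_min_iff]
        exact ⟨⟨hab, ht⟩, ⟨hs, hst⟩⟩
      have e1 : max (min b t) (max a s) = min b t := max_eq_left (le_of_lt hm0)
      have e2 : max a (min b t) = min b t :=
        max_eq_right (_root_.le_trans (le_max_left a s) (le_of_lt hm0))
      have e3 : max a (min b s) = max a s := by rw [min_eq_right (le_of_lt hs)]
      rw [e1, e2, e3]

lemma eRow (hp : S.IsBoundedResId p K) {a b : ℝ} (hab : a < b)
    {ν : ℕ → ℝ} {m : ℕ} (hν0 : ν 0 < -K) (hνm : K ≤ ν m) (hνmono : ∀ j < m, ν j < ν (j + 1)) :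
    ∑ j ∈ Finset.range m, (p (max (min b (ν (j + 1))) (max a (ν j))) - p (max a (ν j)))
      = p b - p a := by
  have hcongr : ∀ j ∈ Finset.range m,
      p (max (min b (ν (j + 1))) (max a (ν j))) - p (max a (ν j))
        = p (max a (min b (ν (j + 1)))) - p (max a (min b (ν j))) := by
    intro j hj
    exact eRow_term hp hab (hνmono j (Finset.mem_range.1 hj))
  rw [Finset.sum_congr rfl hcongr,
    Finset.sum_range_sub (fun j => p (max a (min b (ν j))))]
  have etop : p (max a (min b (ν m))) = p b := by
    rcases le_or_gt b (ν m) with hb | hb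
    · rw [min_eq_left hb, max_eq_right (le_of_lt hab)]
    · have h1 : K ≤ max a (min b (ν m)) :=
        _root_.le_trans hνm (_root_.le_trans (le_min (le_of_lt hb) le_rfl) (le_max_right _ _))
      rw [hp.2.2.2.1 _ h1, hp.2.2.2.1 b (_root_.le_trans hνm (le_of_lt hb))]
  have ebot : p (max a (min b (ν 0))) = p a := by
    rcases le_or_gt (ν 0) a with h0 | h0
    · rw [max_eq_left (_root_.le_trans (min_le_right _ _) h0)]
    · rcases le_or_gt (ν 0) b with h1 | h1
      · rw [min_eq_right h1, max_eq_right (le_of_lt h0)]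
        rw [hp.2.2.1 _ hν0, hp.2.2.1 a (by linarith)]
      · rw [min_eq_left (le_of_lt h1), max_eq_right (le_of_lt hab)]
        rw [hp.2.2.1 b (by linarith), hp.2.2.1 a (by linarith)]
  rw [etop, ebot]

lemma RS_sub_RS_bounds (hp : S.IsBoundedResId p K) {μ γ μ' γ' : ℕ → ℝ} {n n' : ℕ} {h h' : ℝ}
    (hP : ValidPart K h μ γ n) (hP' : ValidPart K h' μ' γ' n') :
    ouNorm S.le (RS S p μ γ n - RS S p μ' γ' n') ≤ h + h' := by
  obtain ⟨hn, h0, hKn, hm, hmesh, htag⟩ := hP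
  obtain ⟨hn', h0', hKn', hm', hmesh', htag'⟩ := hP'
  set E : ℕ → ℕ → R := fun i j =>
    p (max (min (μ (i+1)) (μ' (j+1))) (max (μ i) (μ' j))) - p (max (μ i) (μ' j)) with hE
  have hEmem : ∀ i j, E i j ∈ S.A := fun i j => S.A.sub_mem (hp.2.1 _).1 (hp.2.1 _).1
  have hEnn : ∀ i j, S.nn (E i j) := by
    intro i j
    exact resId_diff_nn hp (le_max_right _ _)
  have hrow : ∀ i < n, ∑ j ∈ Finset.range n', E i j = p (μ (i+1)) - p (μ i) := by
    intro i hi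
    exact eRow hp (hm i hi) h0' hKn' hm'
  have hcol : ∀ j < n', ∑ i ∈ Finset.range n, E i j = p (μ' (j+1)) - p (μ' j) := by
    intro j hj
    have := eRow hp (hm' j hj) (ν := μ) h0 hKn hm
    rw [← this]
    apply Finset.sum_congr rfl
    intro i _
    rw [hE]
    simp only []
    rw [min_comm (μ (i+1)) (μ' (j+1)), max_comm (μ i) (μ' j)]
  have hRSeq : RS S p μ γ n - RS S p μ' γ' n'
      = ∑ i ∈ Finset.range n, ∑ j ∈ Finset.range n', (γ i - γ' j) • E i j := by
    have e1 : RS S p μ γ n = ∑ i ∈ Finset.range n, ∑ j ∈ Finset.range n', γ i • E i j := by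
      unfold RS
      apply Finset.sum_congr rfl
      intro i hi
      rw [← Finset.smul_sum, hrow i (Finset.mem_range.1 hi)]
    have e2 : RS S p μ' γ' n' = ∑ i ∈ Finset.range n, ∑ j ∈ Finset.range n', γ' j • E i j := by
      unfold RS
      rw [Finset.sum_comm]
      apply Finset.sum_congr rfl
      intro j hj
      rw [← Finset.smul_sum, hcol j (Finset.mem_range.1 hj)]
    rw [e1, e2, ← Finset.sum_sub_distrib]
    apply Finset.sum_congr rfl
    intro i _
    rw [← Finset.sum_sub_distrib]
    apply Finset.sum_congr rfl
    intro j _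
    rw [← sub_smul]
  have hover : ∀ i < n, ∀ j < n', (E i j ≠ 0) → (γ i - γ' j ≤ h + h' ∧ γ' j - γ i ≤ h + h') := by
    intro i hi j hj hne
    have hij : μ i < μ' (j+1) ∧ μ' j < μ (i+1) := by
      by_contra hcon
      apply hne
      push_neg at hcon
      rcases le_or_gt (μ' (j+1)) (μ i) with hc | hc
      · rw [hE]
        simp only []
        rw [max_eq_right (_root_.le_trans (min_le_right _ _) (_root_.le_trans hc (le_max_left _ _))), sub_self]
      · have hc2 := hcon hc
        rw [hE]
        simp only []
        have e2 : max (μ i) (μ' j) = μ' j := max_eq_right (_root_.le_trans (le_of_lt (hm i hi)) hc2)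
        rw [e2, max_eq_right (_root_.le_trans (min_le_left _ _) hc2), sub_self]
    obtain ⟨hij1, hij2⟩ := hij
    have t1 := (htag i hi).1; have t2 := (htag i hi).2
    have t3 := (htag' j hj).1; have t4 := (htag' j hj).2
    have m1 := hmesh i hi; have m2 := hmesh' j hj
    constructor <;> nlinarith
  have hub : S.le (RS S p μ γ n - RS S p μ' γ' n') ((h + h') • (1:R)) := by
    rw [hRSeq]
    have step : ∀ i < n, S.le (∑ j ∈ Finset.range n', (γ i - γ' j) • E i j)
        (∑ j ∈ Finset.range n', (h + h') • E i j) := by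
      intro i hi
      apply sum_le_sum (fun j _ => S.A.smul_mem _ (hEmem i j)) (fun j _ => S.A.smul_mem _ (hEmem i j))
      intro j hj
      by_cases hz : E i j = 0
      · rw [hz, smul_zero, smul_zero]; exact S.le_refl 0 S.A.zero_mem
      · rw [le_iff_sub (S.A.smul_mem _ (hEmem i j)) (S.A.smul_mem _ (hEmem i j)), ← sub_smul]
        exact nn_smul (by have := (hover i hi j hj hz).1; linarith) (hEmem i j) (hEnn i j)
    have hsum := sum_le_sum (n := n)
      (fun i _ => S.A.sum_mem (fun j _ => S.A.smul_mem _ (hEmem i j)))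
      (fun i _ => S.A.sum_mem (fun j _ => S.A.smul_mem _ (hEmem i j))) step
    have erhs : ∑ i ∈ Finset.range n, ∑ j ∈ Finset.range n', (h + h') • E i j
        = (h + h') • (1:R) := by
      have : ∀ i ∈ Finset.range n, ∑ j ∈ Finset.range n', (h + h') • E i j
          = (h + h') • (p (μ (i+1)) - p (μ i)) := by
        intro i hi
        rw [← Finset.smul_sum, hrow i (Finset.mem_range.1 hi)]
      rw [Finset.sum_congr rfl this, ← Finset.smul_sum,
        RS_telescope hp ⟨hn, h0, hKn, hm, hmesh, htag⟩]
    rwa [erhs] at hsum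
  have hlb : S.le ((-(h + h')) • (1:R)) (RS S p μ γ n - RS S p μ' γ' n') := by
    rw [hRSeq]
    have step : ∀ i < n, S.le (∑ j ∈ Finset.range n', (-(h + h')) • E i j)
        (∑ j ∈ Finset.range n', (γ i - γ' j) • E i j) := by
      intro i hi
      apply sum_le_sum (fun j _ => S.A.smul_mem _ (hEmem i j)) (fun j _ => S.A.smul_mem _ (hEmem i j))
      intro j hj
      by_cases hz : E i j = 0
      · rw [hz, smul_zero, smul_zero]; exact S.le_refl 0 S.A.zero_mem
      · rw [le_iff_sub (S.A.smul_mem _ (hEmem i j)) (S.A.smul_mem _ (hEmem i j)), ← sub_smul]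
        exact nn_smul (by have := (hover i hi j hj hz).2; linarith) (hEmem i j) (hEnn i j)
    have hsum := sum_le_sum (n := n)
      (fun i _ => S.A.sum_mem (fun j _ => S.A.smul_mem _ (hEmem i j)))
      (fun i _ => S.A.sum_mem (fun j _ => S.A.smul_mem _ (hEmem i j))) step
    have elhs : ∑ i ∈ Finset.range n, ∑ j ∈ Finset.range n', (-(h + h')) • E i j
        = (-(h + h')) • (1:R) := by
      have : ∀ i ∈ Finset.range n, ∑ j ∈ Finset.range n', (-(h + h')) • E i j
          = (-(h + h')) • (p (μ (i+1)) - p (μ i)) := by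
        intro i hi
        rw [← Finset.smul_sum, hrow i (Finset.mem_range.1 hi)]
      rw [Finset.sum_congr rfl this, ← Finset.smul_sum,
        RS_telescope hp ⟨hn, h0, hKn, hm, hmesh, htag⟩]
    rwa [elhs] at hsum
  exact ouNorm_le_of_bounds (S.A.sub_mem (RS_mem hp μ γ n) (RS_mem hp μ' γ' n')) hlb hub

end SynapticAlgebra
namespace SynapticAlgebra
variable {R : Type*} [Ring R] [Algebra ℝ R] {S : SynapticAlgebra R}

lemma nn_of_tendsto {x : R} (hx : x ∈ S.A) {f : ℕ → R} (hf : ∀ k, f k ∈ S.A)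
    (hnn : ∀ k, S.nn (f k))
    (ht : Filter.Tendsto (fun k => ouNorm S.le (x - f k)) Filter.atTop (nhds 0)) :
    S.nn x := by
  apply nn_of_forall_eps hx
  intro ε hε
  have : ∀ᶠ k in Filter.atTop, ouNorm S.le (x - f k) < ε := by
    have := ht.eventually (eventually_lt_nhds (show (0:ℝ) < ε from hε))
    exact this
  obtain ⟨k, hk⟩ := this.exists
  obtain ⟨hb1, _⟩ := bounds_of_ouNorm_lt (S.A.sub_mem hx (hf k)) hk
  -- (-ε)•1 ≤ x - f k, so x + ε•1 = f k + ((x - f k) - (-ε)•1)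
  have h1 : S.nn ((x - f k) - (-ε) • (1:R)) :=
    (le_iff_sub (smul_one_mem _) (S.A.sub_mem hx (hf k))).1 hb1
  have h2 := nn_add (S.A.sub_mem (S.A.sub_mem hx (hf k)) (smul_one_mem _)) (hf k) h1 (hnn k)
  have e : (x - f k - (-ε) • (1:R)) + f k = x + ε • (1:R) := by
    rw [neg_smul]; abel
  rwa [e] at h2

/-- the dyadic grid of level k on [-K-1, K+1] -/
noncomputable def grid (K : ℝ) (k i : ℕ) : ℝ := (-K - 1) + (2*K + 2) * i / 2 ^ k

lemma grid_step (K : ℝ) (k i : ℕ) :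
    grid K k (i + 1) - grid K k i = (2*K + 2) / 2 ^ k := by
  unfold grid
  have h2k : ((2:ℝ) ^ k) ≠ 0 := by positivity
  push_cast
  field_simp
  ring

lemma grid_top (K : ℝ) (k : ℕ) : grid K k (2 ^ k) = K + 1 := by
  unfold grid
  have h2k : ((2:ℝ) ^ k) ≠ 0 := by positivity
  push_cast
  field_simp
  ring

lemma grid_valid {K : ℝ} (hK : 0 ≤ K) (k : ℕ) :
    ValidPart K ((2*K + 2) / 2 ^ k) (grid K k) (grid K k) (2 ^ k) := by
  have h2k : (0:ℝ) < 2 ^ k := by positivity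
  have hstep : ∀ i, grid K k (i+1) - grid K k i = (2*K + 2) / 2 ^ k := grid_step K k
  have hsteppos : (0:ℝ) < (2*K + 2) / 2 ^ k := by positivity
  refine ⟨Nat.pow_pos (by norm_num), ?_, ?_, ?_, ?_, ?_⟩
  · show (-K - 1) + (2*K + 2) * ((0:ℕ):ℝ) / 2 ^ k < -K
    push_cast
    rw [mul_zero, zero_div, add_zero]
    linarith
  · rw [grid_top K k]; linarith
  · intro i _
    have := hstep i; linarith [hstep i]
  · intro i _
    rw [hstep i]
  · intro i _
    exact ⟨le_rfl, by have := hstep i; linarith⟩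

end SynapticAlgebra
namespace SynapticAlgebra
variable {R : Type*} [Ring R] [Algebra ℝ R] {S : SynapticAlgebra R}

lemma isProj_carr {c : R} (hc : c ∈ S.A) : S.IsProj (S.carr c) :=
  ⟨S.carr_mem c hc, S.carr_idem c hc⟩

lemma le_zero_iff_nn_neg {x : R} (hx : x ∈ S.A) : S.le x 0 ↔ S.nn (-x) := by
  rw [le_iff_sub hx S.A.zero_mem, zero_sub]

/-- nonneg commuting square roots are equal -/
lemma comm_sqrt_eq {u w : R} (hu : u ∈ S.A) (hw : w ∈ S.A) (hnu : S.nn u) (hnw : S.nn w)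
    (hsq : u * u = w * w) (hcomm : u * w = w * u) : u = w := by
  have hsmem : u + w ∈ S.A := S.A.add_mem hu hw
  have hdmem : u - w ∈ S.A := S.A.sub_mem hu hw
  have hsd : (u + w) * (u - w) = 0 := by
    simp only [add_mul, mul_sub]
    rw [hsq, hcomm]
    abel
  have heproj : S.IsProj (S.carr (u + w)) := isProj_carr hsmem
  set e := S.carr (u + w) with hedef
  have hed : e * (u - w) = 0 := (S.carr_spec (u + w) hsmem (u - w) hdmem).1 hsd
  have hce : S.IsProj (1 - e) := isProj_compl heproj
  have hse : (u + w) * (1 - e) = 0 := by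
    apply (S.carr_spec (u + w) hsmem (1 - e) hce.1).2
    rw [mul_sub, mul_one, heproj.2, sub_self]
  have hsum : (1 - e) * u * (1 - e) + (1 - e) * w * (1 - e) = 0 := by
    have h1 : (1 - e) * u * (1 - e) + (1 - e) * w * (1 - e) = (1 - e) * ((u + w) * (1 - e)) := by
      simp only [mul_add, add_mul, mul_assoc]
    rw [h1, hse, mul_zero]
  have hxnn : S.nn ((1 - e) * u * (1 - e)) := S.quad_nn _ hce.1 u hu (nn_proj hce) hnu
  have hynn : S.nn ((1 - e) * w * (1 - e)) := S.quad_nn _ hce.1 w hw (nn_proj hce) hnw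
  have hx : (1 - e) * u * (1 - e) = 0 := by
    apply nn_antisymm (S.quad_mem _ hce.1 u hu) hxnn
    rw [le_zero_iff_nn_neg (S.quad_mem _ hce.1 u hu)]
    rw [show -((1 - e) * u * (1 - e)) = (1 - e) * w * (1 - e) by
      rw [← neg_eq_of_add_eq_zero_right hsum]]
    exact hynn
  have hy : (1 - e) * w * (1 - e) = 0 := by
    rw [hx, zero_add] at hsum; exact hsum
  have heu : e * u = u := by
    have := (S.quad_zero (1 - e) hce.1 u hu hnu hx).1
    rw [sub_mul, one_mul, sub_eq_zero] at this
    exact this.symm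
  have hew : e * w = w := by
    have := (S.quad_zero (1 - e) hce.1 w hw hnw hy).1
    rw [sub_mul, one_mul, sub_eq_zero] at this
    exact this.symm
  have : u - w = 0 := by
    have h1 : u - w = e * (u - w) := by rw [mul_sub, heu, hew]
    rw [h1, hed]
  rwa [sub_eq_zero] at this

/-- if `b` splits as a nonpositive part on `q` and nonneg part on `1-q`, then
`sqrt (b*b) = b*(1-q) - b*q` -/
lemma split_sqrt {b q : R} (hb : b ∈ S.A) (hq : S.IsProj q) (hbq : b * q = q * b)
    (T1 : S.nn (-(b * q))) (T2 : S.nn (b * (1 - q))) :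
    S.sqrt (b * b) = b * ((1 - q) - q) := by
  have hq' : S.IsProj ((1:R) - q) := isProj_compl hq
  have hbq' : b * (1 - q) = (1 - q) * b := by
    simp only [mul_sub, sub_mul, mul_one, one_mul, hbq]
  have hbqmem : b * q ∈ S.A := mul_mem_of_comm hb hq.1 hbq
  have hbq'mem : b * (1 - q) ∈ S.A := mul_mem_of_comm hb hq'.1 hbq'
  have hdmem : ((1:R) - q) - q ∈ S.A := S.A.sub_mem hq'.1 hq.1
  have hdd : (((1:R) - q) - q) * (((1:R) - q) - q) = 1 := by
    simp only [sub_mul, mul_sub, one_mul, mul_one, hq.2]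
    abel
  have hbd : b * (((1:R) - q) - q) = (((1:R) - q) - q) * b := by
    simp only [sub_mul, mul_sub, one_mul, mul_one, hbq]
  have humem : b * (((1:R) - q) - q) ∈ S.A := mul_mem_of_comm hb hdmem hbd
  have hueq : b * (((1:R) - q) - q) = b * (1 - q) - b * q := by rw [mul_sub]
  have hunn : S.nn (b * (((1:R) - q) - q)) := by
    rw [hueq, sub_eq_add_neg]
    exact nn_add hbq'mem (S.A.neg_mem hbqmem) T2 T1
  have husq : (b * (((1:R) - q) - q)) * (b * (((1:R) - q) - q)) = b * b := by
    have h1 : (((1:R) - q) - q) * (b * (((1:R) - q) - q)) = b := by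
      rw [← mul_assoc, ← hbd, mul_assoc, hdd, mul_one]
    rw [mul_assoc, h1]
  have hbbmem : b * b ∈ S.A := S.sq_mem b hb
  have hbbnn : S.nn (b * b) := S.sq_nn b hb
  have hwmem : S.sqrt (b * b) ∈ S.A := S.sqrt_mem _ hbbmem hbbnn
  have hwnn : S.nn (S.sqrt (b * b)) := S.sqrt_nn _ hbbmem hbbnn
  have hwsq : S.sqrt (b * b) * S.sqrt (b * b) = b * b := S.sqrt_sq _ hbbmem hbbnn
  have hwb : S.sqrt (b * b) * b = b * S.sqrt (b * b) :=
    S.sqrt_bicomm _ hbbmem hbbnn b hb (by rw [mul_assoc])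
  have hwq : S.sqrt (b * b) * q = q * S.sqrt (b * b) := by
    apply S.sqrt_bicomm _ hbbmem hbbnn q hq.1
    rw [mul_assoc, hbq, ← mul_assoc, hbq, mul_assoc]
  have hwd : S.sqrt (b * b) * (((1:R) - q) - q) = (((1:R) - q) - q) * S.sqrt (b * b) := by
    simp only [mul_sub, sub_mul, mul_one, one_mul, hwq]
  have huw : (b * (((1:R) - q) - q)) * S.sqrt (b * b)
      = S.sqrt (b * b) * (b * (((1:R) - q) - q)) := by
    rw [mul_assoc, ← hwd, ← mul_assoc, ← hwb, mul_assoc]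
  exact (comm_sqrt_eq humem hwmem hunn hwnn (by rw [husq, hwsq]) huw).symm

lemma split_pospart {b q : R} (hb : b ∈ S.A) (hq : S.IsProj q) (hbq : b * q = q * b)
    (T1 : S.nn (-(b * q))) (T2 : S.nn (b * (1 - q))) :
    S.pospart b = b * (1 - q) := by
  unfold pospart absval
  rw [split_sqrt hb hq hbq T1 T2]
  have h1 : b * (((1:R) - q) - q) + b = b * (1 - q) + b * (1 - q) := by
    simp only [mul_sub, mul_one]
    abel
  rw [h1, ← two_smul ℝ (b * (1 - q)), smul_smul]
  norm_num

end SynapticAlgebra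
namespace SynapticAlgebra
variable {R : Type*} [Ring R] [Algebra ℝ R] {S : SynapticAlgebra R}
variable {p : ℝ → R} {K : ℝ}

lemma specProj_eq (hp : S.IsBoundedResId p K) {a : R} (ha : a ∈ S.A)
    (hcomm : ∀ t, a * p t = p t * a)
    (hub : ∀ t : ℝ, S.le (a * p t) (t • p t))
    (hlb : ∀ t : ℝ, S.le (t • ((1:R) - p t)) (a * ((1:R) - p t))) :
    ∀ l : ℝ, S.specProj a l = p l := by
  intro l
  obtain ⟨hK, hproj, hlow, hhigh, hmono, hinf⟩ := hp
  have hq : S.IsProj (p l) := hproj l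
  have hq' : S.IsProj ((1:R) - p l) := isProj_compl hq
  have hb : a - algebraMap ℝ R l ∈ S.A := S.A.sub_mem ha (algebraMap_mem l)
  have hmq : ∀ x : R, algebraMap ℝ R l * x = l • x := by
    intro x
    rw [Algebra.algebraMap_eq_smul_one, smul_mul_assoc, one_mul]
  have hqm : ∀ x : R, x * algebraMap ℝ R l = l • x := by
    intro x
    rw [Algebra.algebraMap_eq_smul_one, mul_smul_comm, mul_one]
  have hbq : (a - algebraMap ℝ R l) * p l = p l * (a - algebraMap ℝ R l) := by
    rw [sub_mul, mul_sub, hcomm l, hmq, hqm]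
  have hbq' : (a - algebraMap ℝ R l) * ((1:R) - p l)
      = ((1:R) - p l) * (a - algebraMap ℝ R l) := by
    rw [mul_sub (a - algebraMap ℝ R l) 1 (p l), sub_mul 1 (p l) (a - algebraMap ℝ R l), mul_one, one_mul, hbq]
  have haq : a * p l ∈ S.A := mul_mem_of_comm ha hq.1 (hcomm l)
  have haq' : a * ((1:R) - p l) ∈ S.A := mul_mem_of_comm ha hq'.1 (by
    rw [mul_sub a 1 (p l), sub_mul 1 (p l) a, mul_one, one_mul, hcomm l])
  have hbqmem : (a - algebraMap ℝ R l) * p l ∈ S.A := mul_mem_of_comm hb hq.1 hbq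
  have hbq'mem : (a - algebraMap ℝ R l) * ((1:R) - p l) ∈ S.A := mul_mem_of_comm hb hq'.1 hbq'
  have T1 : S.nn (-((a - algebraMap ℝ R l) * p l)) := by
    have e : -((a - algebraMap ℝ R l) * p l) = l • p l - a * p l := by
      rw [sub_mul, hmq, neg_sub]
    rw [e]
    exact (le_iff_sub haq (S.A.smul_mem l hq.1)).1 (hub l)
  have T2 : S.nn ((a - algebraMap ℝ R l) * ((1:R) - p l)) := by
    have e : (a - algebraMap ℝ R l) * ((1:R) - p l)
        = a * ((1:R) - p l) - l • ((1:R) - p l) := by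
      rw [sub_mul, hmq]
    rw [e]
    exact (le_iff_sub (S.A.smul_mem l hq'.1) haq').1 (hlb l)
  have hpos : S.pospart (a - algebraMap ℝ R l) = (a - algebraMap ℝ R l) * ((1:R) - p l) :=
    split_pospart hb hq hbq T1 T2
  -- now the carrier
  set c := (a - algebraMap ℝ R l) * ((1:R) - p l) with hcdef
  set e := S.carr c with hedef
  have heproj : S.IsProj e := isProj_carr hbq'mem
  have hq'q : ((1:R) - p l) * p l = 0 := by
    rw [sub_mul, one_mul, hq.2, sub_self]
  have hqq' : p l * ((1:R) - p l) = 0 := by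
    rw [mul_sub, mul_one, hq.2, sub_self]
  have hcq : c * p l = 0 := by
    rw [hcdef, mul_assoc, hq'q, mul_zero]
  have heq : e * p l = 0 := (S.carr_spec c hbq'mem (p l) hq.1).1 hcq
  have hqe : p l * e = 0 := proj_orth_symm heproj.1 hq heq
  have heq' : e * ((1:R) - p l) = e := by
    rw [mul_sub, mul_one, heq, sub_zero]
  have hq'e : ((1:R) - p l) * e = e := by
    rw [sub_mul, one_mul, hqe, sub_zero]
  have hfmem : ((1:R) - p l) - e ∈ S.A := S.A.sub_mem hq'.1 heproj.1
  have hfproj : S.IsProj (((1:R) - p l) - e) := by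
    refine ⟨hfmem, ?_⟩
    simp only [sub_mul, mul_sub, one_mul, mul_one, hq.2, heq, hqe, heq', hq'e, heproj.2]
    abel
  set f := ((1:R) - p l) - e with hfdef
  have hfq : f * p l = 0 := by
    rw [hfdef, sub_mul, hq'q, heq, sub_self]
  have hqf : p l * f = 0 := by
    rw [hfdef, mul_sub, hqq', hqe, sub_self]
  have hef : e * f = 0 := by
    rw [hfdef, mul_sub, heq', heproj.2, sub_self]
  have hcf : c * f = 0 := (S.carr_spec c hbq'mem f hfmem).2 hef
  have hfc : f * c = 0 := by
    have h1 : f * c * f = 0 := by rw [mul_assoc, hcf, mul_zero]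
    exact (S.quad_zero f hfmem c hbq'mem T2 h1).1
  have hfbq : f * ((a - algebraMap ℝ R l) * p l) = 0 := by
    have h0 : ((a - algebraMap ℝ R l) * p l) * f = 0 := by
      rw [mul_assoc, hqf, mul_zero]
    have h1 : f * (-((a - algebraMap ℝ R l) * p l)) * f = 0 := by
      rw [mul_neg, neg_mul, mul_assoc, h0, mul_zero, neg_zero]
    have := (S.quad_zero f hfmem _ (S.A.neg_mem hbqmem) T1 h1).1
    rw [mul_neg, neg_eq_zero] at this
    exact this
  have hfb : f * (a - algebraMap ℝ R l) = 0 := by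
    have hsplit : a - algebraMap ℝ R l
        = (a - algebraMap ℝ R l) * p l + c := by
      rw [hcdef, ← mul_add]
      simp
    rw [hsplit, mul_add, hfbq, hfc, add_zero]
  have hfa : f * a = l • f := by
    rw [mul_sub, hqm, sub_eq_zero] at hfb
    exact hfb
  -- f is dominated by every p t with t > l
  have hflept : ∀ t : ℝ, l < t → f * p t = f ∧ p t * f = f := by
    intro t hlt
    have hrproj : S.IsProj ((1:R) - p t) := isProj_compl (hproj t)
    have hra : a * ((1:R) - p t) = ((1:R) - p t) * a := by
      rw [mul_sub a 1 (p t), sub_mul 1 (p t) a, mul_one, one_mul, hcomm t]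
    have harmem : a * ((1:R) - p t) ∈ S.A := mul_mem_of_comm ha hrproj.1 hra
    have hymem : a * ((1:R) - p t) - t • ((1:R) - p t) ∈ S.A :=
      S.A.sub_mem harmem (S.A.smul_mem t hrproj.1)
    have hynn : S.nn (a * ((1:R) - p t) - t • ((1:R) - p t)) :=
      (le_iff_sub (S.A.smul_mem t hrproj.1) harmem).1 (hlb t)
    have hfyf_nn : S.nn (f * (a * ((1:R) - p t) - t • ((1:R) - p t)) * f) :=
      S.quad_nn f hfmem _ hymem (nn_proj hfproj) hynn
    have hfrf_nn : S.nn (f * ((1:R) - p t) * f) :=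
      S.quad_nn f hfmem _ hrproj.1 (nn_proj hfproj) (nn_proj hrproj)
    have hfrf_mem : f * ((1:R) - p t) * f ∈ S.A := S.quad_mem f hfmem _ hrproj.1
    have h1 : f * (a * ((1:R) - p t)) * f = l • (f * ((1:R) - p t) * f) := by
      rw [← mul_assoc, hfa, smul_mul_assoc, smul_mul_assoc]
    have hfyf_eq : f * (a * ((1:R) - p t) - t • ((1:R) - p t)) * f
        = (l - t) • (f * ((1:R) - p t) * f) := by
      rw [mul_sub f (a * ((1:R) - p t)) (t • ((1:R) - p t)), sub_mul,
        mul_smul_comm, smul_mul_assoc, h1, ← sub_smul]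
    have hfrf0 : f * ((1:R) - p t) * f = 0 := by
      apply nn_antisymm hfrf_mem hfrf_nn
      have h2 : S.nn ((l - t) • (f * ((1:R) - p t) * f)) := by
        rw [← hfyf_eq]; exact hfyf_nn
      have h3 : S.nn ((t - l)⁻¹ • ((t - l) • (-(f * ((1:R) - p t) * f)))) := by
        apply nn_smul (inv_nonneg.2 (by linarith)) (S.A.smul_mem _ (S.A.neg_mem hfrf_mem))
        rw [show (t - l) • (-(f * ((1:R) - p t) * f)) = (l - t) • (f * ((1:R) - p t) * f) by
          rw [smul_neg, ← neg_smul, neg_sub]]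
        exact h2
      rw [smul_smul, inv_mul_cancel₀ (by linarith : t - l ≠ 0), one_smul] at h3
      rw [le_zero_iff_nn_neg hfrf_mem]
      exact h3
    have hquad := S.quad_zero f hfmem _ hrproj.1 (nn_proj hrproj) hfrf0
    constructor
    · have := hquad.1
      rw [mul_sub, mul_one, sub_eq_zero] at this
      exact this.symm
    · have := hquad.2
      rw [sub_mul, one_mul, sub_eq_zero] at this
      exact this.symm
  have hfleq : S.le f (p l) := by
    apply (hinf l).2.2 f hfproj
    rintro x ⟨t, ht, rfl⟩
    exact proj_le_of_mul hfproj (hproj t) (hflept t ht).2 (hflept t ht).1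
  have hf0 : f = 0 := by
    have := proj_le_mul hfproj hq hfleq
    rw [← this.2, hfq]
  have hfe : e = (1:R) - p l := by
    have h1 : ((1:R) - p l) - e = 0 := hf0
    rw [sub_eq_zero] at h1
    exact h1.symm
  show (1:R) - S.carr (S.pospart (a - algebraMap ℝ R l)) = p l
  rw [hpos, ← hedef, hfe]
  abel

end SynapticAlgebra
namespace SynapticAlgebra
variable {R : Type*} [Ring R] [Algebra ℝ R] {S : SynapticAlgebra R}
variable {p : ℝ → R} {K : ℝ}

lemma sum_range_double {M : Type*} [AddCommMonoid M] (f : ℕ → M) (m : ℕ) :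
    ∑ j ∈ Finset.range (2 * m), f j = ∑ i ∈ Finset.range m, (f (2 * i) + f (2 * i + 1)) := by
  induction m with
  | zero => simp
  | succ n ih =>
    rw [Finset.sum_range_succ, ← ih, Nat.mul_succ,
      show 2 * n + 2 = (2 * n + 1) + 1 from rfl,
      Finset.sum_range_succ, Finset.sum_range_succ]
    abel

lemma grid_double (K : ℝ) (k i : ℕ) : grid K (k + 1) (2 * i) = grid K k i := by
  unfold grid
  have h2k : ((2:ℝ) ^ k) ≠ 0 := by positivity
  push_cast
  rw [pow_succ]
  field_simp

lemma grid_mono {K : ℝ} (hK : 0 ≤ K) (k : ℕ) {i j : ℕ} (h : i ≤ j) :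
    grid K k i ≤ grid K k j := by
  unfold grid
  have h2k : (0:ℝ) < 2 ^ k := by positivity
  have hij : (i:ℝ) ≤ (j:ℝ) := by exact_mod_cast h
  gcongr

/-- the lower Riemann sums over dyadic grids increase -/
lemma Lw_mono (hp : S.IsBoundedResId p K) (k : ℕ) :
    S.le (RS S p (grid K k) (grid K k) (2 ^ k)) (RS S p (grid K (k+1)) (grid K (k+1)) (2 ^ (k+1))) := by
  have hK := hp.1
  have hdmem : ∀ s t : ℝ, p t - p s ∈ S.A := fun s t => S.A.sub_mem (hp.2.1 t).1 (hp.2.1 s).1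
  have hstep1 : (0:ℝ) < (2*K+2) / 2 ^ (k+1) := by positivity
  have e2 : (2:ℕ) ^ (k+1) = 2 * 2 ^ k := by rw [pow_succ, Nat.mul_comm]
  unfold RS
  rw [e2, sum_range_double]
  apply sum_le_sum
  · intro i _
    exact S.A.smul_mem _ (S.A.sub_mem (hp.2.1 _).1 (hp.2.1 _).1)
  · intro i _
    exact S.A.add_mem (S.A.smul_mem _ (S.A.sub_mem (hp.2.1 _).1 (hp.2.1 _).1))
      (S.A.smul_mem _ (S.A.sub_mem (hp.2.1 _).1 (hp.2.1 _).1))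
  · intro i _
    have hc : grid K (k+1) (2 * i) = grid K k i := grid_double K k i
    have he : grid K (k+1) (2 * i + 1 + 1) = grid K k (i + 1) := by
      rw [show 2 * i + 1 + 1 = 2 * (i + 1) from by ring, grid_double]
    have hd : grid K (k+1) (2 * i) ≤ grid K (k+1) (2 * i + 1) := grid_mono hK (k+1) (by omega)
    have hde : grid K (k+1) (2 * i + 1) ≤ grid K k (i+1) := by
      rw [← he]; exact grid_mono hK (k+1) (by omega)
    set c := grid K k i
    set d := grid K (k+1) (2 * i + 1)
    set ee := grid K k (i + 1)
    -- goal : c • (p ee - p c) ≤ c • (p d - p c) + d • (p ee - p d)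
    have lmem : c • (p ee - p c) ∈ S.A := S.A.smul_mem _ (hdmem _ _)
    have rmem : (grid K (k+1) (2*i)) • (p (grid K (k+1) (2*i+1)) - p (grid K (k+1) (2*i)))
        + d • (p (grid K (k+1) (2*i+1+1)) - p d) ∈ S.A :=
      S.A.add_mem (S.A.smul_mem _ (hdmem _ _)) (S.A.smul_mem _ (hdmem _ _))
    rw [hc, he] at rmem ⊢
    rw [le_iff_sub lmem rmem]
    have eid : c • (p d - p c) + d • (p ee - p d) - c • (p ee - p c)
        = (d - c) • (p ee - p d) := by
      simp only [smul_sub, sub_smul]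
      abel
    rw [eid]
    have hdc : c ≤ d := by rwa [← hc]
    exact nn_smul (by linarith) (hdmem _ _) (resId_diff_nn hp hde)

/-- lower sums multiplied by `p t` stay below `t • p t` -/
lemma lower_RS_mul_proj (hp : S.IsBoundedResId p K) {μ : ℕ → ℝ} {n : ℕ} {h : ℝ}
    (hP : ValidPart K h μ μ n) (t : ℝ) :
    S.le (RS S p μ μ n * p t) (t • p t) := by
  obtain ⟨hn, h0, hKn, hm, hmesh, htag⟩ := hP
  have hexp : RS S p μ μ n * p t
      = ∑ i ∈ Finset.range n, μ i • (p (min (μ (i+1)) t) - p (min (μ i) t)) := by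
    unfold RS
    rw [Finset.sum_mul]
    apply Finset.sum_congr rfl
    intro i _
    rw [smul_mul_assoc, sub_mul, (resId_mul hp (μ (i+1)) t).1, (resId_mul hp (μ i) t).1]
  rw [hexp]
  have hdmem : ∀ i, p (min (μ (i+1)) t) - p (min (μ i) t) ∈ S.A :=
    fun i => S.A.sub_mem (hp.2.1 _).1 (hp.2.1 _).1
  have step : ∀ i < n, S.le (μ i • (p (min (μ (i+1)) t) - p (min (μ i) t)))
      (t • (p (min (μ (i+1)) t) - p (min (μ i) t))) := by
    intro i hi
    rcases le_or_gt (μ i) t with hit | hit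
    · rw [le_iff_sub (S.A.smul_mem _ (hdmem i)) (S.A.smul_mem _ (hdmem i)), ← sub_smul]
      exact nn_smul (by linarith) (hdmem i)
        (resId_diff_nn hp (min_le_min (le_of_lt (hm i hi)) le_rfl))
    · have : min (μ (i+1)) t = t := min_eq_right (le_of_lt (lt_trans hit (hm i hi)))
      rw [this, min_eq_right (le_of_lt hit), sub_self, smul_zero, smul_zero]
      exact S.le_refl 0 S.A.zero_mem
  have := sum_le_sum (fun i _ => S.A.smul_mem _ (hdmem i)) (fun i _ => S.A.smul_mem _ (hdmem i)) step
  refine S.le_trans _ (S.A.sum_mem (fun i hi => S.A.smul_mem _ (hdmem i)))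
    _ (S.A.sum_mem (fun i hi => S.A.smul_mem _ (hdmem i))) _ (S.A.smul_mem t (hp.2.1 t).1) this ?_
  rw [← Finset.smul_sum, Finset.sum_range_sub (fun i => p (min (μ i) t))]
  have etop : p (min (μ n) t) = p t := by
    rcases le_total t (μ n) with h1 | h1
    · rw [min_eq_right h1]
    · rw [min_eq_left h1, hp.2.2.2.1 (μ n) hKn, hp.2.2.2.1 t (_root_.le_trans hKn h1)]
  have ebot : p (min (μ 0) t) = 0 := by
    rcases le_total (μ 0) t with h1 | h1
    · rw [min_eq_left h1, hp.2.2.1 (μ 0) h0]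
    · rw [min_eq_right h1, hp.2.2.1 t (lt_of_le_of_lt h1 h0)]
  rw [etop, ebot, sub_zero]
  exact S.le_refl _ (S.A.smul_mem t (hp.2.1 t).1)

/-- lower sums multiplied by `1 - p t` stay above `(t - h) • (1 - p t)` -/
lemma lower_RS_mul_compl (hp : S.IsBoundedResId p K) {μ : ℕ → ℝ} {n : ℕ} {h : ℝ}
    (hP : ValidPart K h μ μ n) (t : ℝ) :
    S.le ((t - h) • ((1:R) - p t)) (RS S p μ μ n * ((1:R) - p t)) := by
  obtain ⟨hn, h0, hKn, hm, hmesh, htag⟩ := hP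
  have hpw : ∀ u : ℝ, p u - p (min u t) = p (max u t) - p t := by
    intro u
    rcases le_total u t with h1 | h1
    · rw [min_eq_left h1, max_eq_right h1, sub_self, sub_self]
    · rw [min_eq_right h1, max_eq_left h1]
  have hexp : RS S p μ μ n * ((1:R) - p t)
      = ∑ i ∈ Finset.range n, μ i • (p (max (μ (i+1)) t) - p (max (μ i) t)) := by
    unfold RS
    rw [Finset.sum_mul]
    apply Finset.sum_congr rfl
    intro i _
    rw [smul_mul_assoc, mul_sub, mul_one, sub_mul, (resId_mul hp (μ (i+1)) t).1,
      (resId_mul hp (μ i) t).1]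
    congr 1
    have e1 := hpw (μ (i+1))
    have e2 := hpw (μ i)
    have : p (μ (i+1)) - p (μ i) - (p (min (μ (i+1)) t) - p (min (μ i) t))
        = (p (μ (i+1)) - p (min (μ (i+1)) t)) - (p (μ i) - p (min (μ i) t)) := by abel
    rw [this, e1, e2]
    abel
  rw [hexp]
  have hdmem : ∀ i, p (max (μ (i+1)) t) - p (max (μ i) t) ∈ S.A :=
    fun i => S.A.sub_mem (hp.2.1 _).1 (hp.2.1 _).1
  have step : ∀ i < n, S.le ((t - h) • (p (max (μ (i+1)) t) - p (max (μ i) t)))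
      (μ i • (p (max (μ (i+1)) t) - p (max (μ i) t))) := by
    intro i hi
    rcases le_or_gt (μ (i+1)) t with hit | hit
    · rw [max_eq_right hit, max_eq_right (_root_.le_trans (le_of_lt (hm i hi)) hit), sub_self,
        smul_zero, smul_zero]
      exact S.le_refl 0 S.A.zero_mem
    · have hγ : t - h ≤ μ i := by
        have := hmesh i hi; linarith
      rw [le_iff_sub (S.A.smul_mem _ (hdmem i)) (S.A.smul_mem _ (hdmem i)), ← sub_smul]
      exact nn_smul (by linarith) (hdmem i)
        (resId_diff_nn hp (max_le_max (le_of_lt (hm i hi)) le_rfl))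
  have hsum := sum_le_sum (fun i _ => S.A.smul_mem _ (hdmem i))
    (fun i _ => S.A.smul_mem _ (hdmem i)) step
  refine S.le_trans _ (S.A.smul_mem _ (S.A.sub_mem S.one_mem (hp.2.1 t).1))
    _ (S.A.sum_mem (fun i hi => S.A.smul_mem _ (hdmem i)))
    _ (S.A.sum_mem (fun i hi => S.A.smul_mem _ (hdmem i))) ?_ hsum
  rw [← Finset.smul_sum, Finset.sum_range_sub (fun i => p (max (μ i) t))]
  have etop : p (max (μ n) t) = 1 := hp.2.2.2.1 _ (_root_.le_trans hKn (le_max_left _ _))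
  have ebot : p (max (μ 0) t) = p t := by
    rcases le_total (μ 0) t with h1 | h1
    · rw [max_eq_right h1]
    · rw [max_eq_left h1, hp.2.2.1 (μ 0) h0, hp.2.2.1 t (lt_of_le_of_lt h1 h0)]
  rw [etop, ebot]
  exact S.le_refl _ (S.A.smul_mem _ (S.A.sub_mem S.one_mem (hp.2.1 t).1))

end SynapticAlgebra
namespace SynapticAlgebra
variable {R : Type*} [Ring R] [Algebra ℝ R] {S : SynapticAlgebra R}
variable {p : ℝ → R} {K : ℝ}

lemma mesh_tendsto (K : ℝ) :
    Filter.Tendsto (fun k : ℕ => (2*K+2) / 2 ^ k) Filter.atTop (nhds 0) := by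
  have h1 : (fun k : ℕ => (2*K+2) / 2 ^ k) = fun k : ℕ => (2*K+2) * ((2:ℝ)⁻¹) ^ k := by
    funext k
    rw [inv_pow, div_eq_mul_inv]
  rw [h1]
  have := (tendsto_pow_atTop_nhds_zero_of_lt_one (by norm_num : (0:ℝ) ≤ 2⁻¹)
    (by norm_num : (2:ℝ)⁻¹ < 1)).const_mul (2*K+2)
  simpa using this

lemma exists_limit (hB : S.IsBanach) (hp : S.IsBoundedResId p K) :
    ∃ a ∈ S.A, (∀ t, a * p t = p t * a) ∧ (∀ t : ℝ, S.le (a * p t) (t • p t)) ∧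
      (∀ t : ℝ, S.le (t • ((1:R) - p t)) (a * ((1:R) - p t))) ∧ ouNorm S.le a ≤ K ∧
      Filter.Tendsto (fun k => ouNorm S.le (a - RS S p (grid K k) (grid K k) (2 ^ k)))
        Filter.atTop (nhds 0) := by
  have hK := hp.1
  set L : ℕ → R := fun k => RS S p (grid K k) (grid K k) (2 ^ k) with hLdef
  have hLmem : ∀ k, L k ∈ S.A := fun k => RS_mem hp _ _ _
  have hvalid : ∀ k, ValidPart K ((2*K+2)/2^k) (grid K k) (grid K k) (2^k) :=
    fun k => grid_valid hK k
  have hmesh_nn : ∀ k : ℕ, (0:ℝ) ≤ (2*K+2)/2^k := fun k => by positivity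
  have hmesh_anti : ∀ {m k : ℕ}, m ≤ k → (2*K+2)/2^k ≤ (2*K+2)/2^m := by
    intro m k hmk
    apply div_le_div_of_nonneg_left (by linarith) (by positivity)
    exact pow_le_pow_right₀ (by norm_num) hmk
  have hLcau : ∀ ε : ℝ, 0 < ε → ∃ N : ℕ, ∀ m ≥ N, ∀ n ≥ N, ouNorm S.le (L m - L n) < ε := by
    intro ε hε
    obtain ⟨N, hN⟩ := ((mesh_tendsto K).eventually (eventually_lt_nhds
      (show (0:ℝ) < ε/2 by linarith))).exists_forall_of_atTop
    refine ⟨N, fun m hm n hn => ?_⟩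
    have := RS_sub_RS_bounds hp (hvalid m) (hvalid n)
    have h2 : (2*K+2)/2^m + (2*K+2)/2^n ≤ (2*K+2)/2^N + (2*K+2)/2^N :=
      add_le_add (hmesh_anti hm) (hmesh_anti hn)
    have h3 := hN N le_rfl
    calc ouNorm S.le (L m - L n) ≤ (2*K+2)/2^m + (2*K+2)/2^n := this
      _ < ε := by linarith
  obtain ⟨a, ha, hconv⟩ := hB L hLmem hLcau
  have hacomm : ∀ t, a * p t = p t * a := by
    intro t
    apply S.comm_closed a ha (p t) (hp.2.1 t).1 L hLmem
    · intro k
      exact Lw_mono hp k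
    · intro m k
      exact RS_comm_RS hp _ _ _ _ _ _
    · intro k
      exact RS_comm hp _ _ _ t
    · exact hconv
  have hLcommA : ∀ k t, (L k - a) * p t = p t * (L k - a) := by
    intro k t
    rw [sub_mul, mul_sub, RS_comm hp _ _ _ t, hacomm t]
  have hub : ∀ t : ℝ, S.le (a * p t) (t • p t) := by
    intro t
    have hqmem := (hp.2.1 t).1
    have haq : a * p t ∈ S.A := mul_mem_of_comm ha hqmem (hacomm t)
    have hLq : ∀ k, L k * p t ∈ S.A :=
      fun k => mul_mem_of_comm (hLmem k) hqmem (RS_comm hp _ _ _ t)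
    rw [le_iff_sub haq (S.A.smul_mem t hqmem)]
    apply nn_of_tendsto (S.A.sub_mem (S.A.smul_mem t hqmem) haq)
      (f := fun k => t • p t - L k * p t)
      (fun k => S.A.sub_mem (S.A.smul_mem t hqmem) (hLq k))
      (fun k => (le_iff_sub (hLq k) (S.A.smul_mem t hqmem)).1 (lower_RS_mul_proj hp (hvalid k) t))
    apply squeeze_zero (g := fun k => ouNorm S.le (a - L k))
    · intro k
      exact ouNorm_nonneg (S.A.sub_mem (S.A.sub_mem (S.A.smul_mem t hqmem) haq)
        (S.A.sub_mem (S.A.smul_mem t hqmem) (hLq k)))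
    · intro k
      have e : t • p t - a * p t - (t • p t - L k * p t) = (L k - a) * p t := by
        rw [sub_mul]; abel
      rw [e]
      have h1 : ouNorm S.le ((L k - a) * p t) ≤ ouNorm S.le (L k - a) :=
        ouNorm_mul_proj_le (S.A.sub_mem (hLmem k) ha) (hp.2.1 t) (hLcommA k t)
      have h2 : ouNorm S.le (L k - a) = ouNorm S.le (a - L k) := by
        rw [show L k - a = -(a - L k) by abel, ouNorm_neg (S.A.sub_mem ha (hLmem k))]
      rw [h2] at h1
      exact h1
    · exact hconv
  have hlb : ∀ t : ℝ, S.le (t • ((1:R) - p t)) (a * ((1:R) - p t)) := by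
    intro t
    have hq't : S.IsProj ((1:R) - p t) := isProj_compl (hp.2.1 t)
    have hqmem := hq't.1
    have hacomm' : a * ((1:R) - p t) = ((1:R) - p t) * a := by
      rw [mul_sub a 1 (p t), sub_mul 1 (p t) a, mul_one, one_mul, hacomm t]
    have hLcomm' : ∀ k, L k * ((1:R) - p t) = ((1:R) - p t) * L k := by
      intro k
      rw [mul_sub (L k) 1 (p t), sub_mul 1 (p t) (L k), mul_one, one_mul, RS_comm hp _ _ _ t]
    have haq : a * ((1:R) - p t) ∈ S.A := mul_mem_of_comm ha hqmem hacomm'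
    have hLq : ∀ k, L k * ((1:R) - p t) ∈ S.A :=
      fun k => mul_mem_of_comm (hLmem k) hqmem (hLcomm' k)
    rw [le_iff_sub (S.A.smul_mem t hqmem) haq]
    apply nn_of_tendsto (S.A.sub_mem haq (S.A.smul_mem t hqmem))
      (f := fun k => L k * ((1:R) - p t) - (t - (2*K+2)/2^k) • ((1:R) - p t))
      (fun k => S.A.sub_mem (hLq k) (S.A.smul_mem _ hqmem))
      (fun k => (le_iff_sub (S.A.smul_mem _ hqmem) (hLq k)).1 (lower_RS_mul_compl hp (hvalid k) t))
    apply squeeze_zero (g := fun k => ouNorm S.le (a - L k) + (2*K+2)/2^k)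
    · intro k
      exact ouNorm_nonneg (S.A.sub_mem (S.A.sub_mem haq (S.A.smul_mem t hqmem))
        (S.A.sub_mem (hLq k) (S.A.smul_mem _ hqmem)))
    · intro k
      have e : a * ((1:R) - p t) - t • ((1:R) - p t)
          - (L k * ((1:R) - p t) - (t - (2*K+2)/2^k) • ((1:R) - p t))
          = (a - L k) * ((1:R) - p t) + (-(((2*K+2)/2^k) • ((1:R) - p t))) := by
        rw [sub_mul, sub_smul]
        abel
      rw [e]
      have h1 : ouNorm S.le ((a - L k) * ((1:R) - p t)) ≤ ouNorm S.le (a - L k) := by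
        apply ouNorm_mul_proj_le (S.A.sub_mem ha (hLmem k)) hq't
        rw [sub_mul a (L k) ((1:R) - p t), hacomm', hLcomm' k, ← mul_sub]
      have h2 : ouNorm S.le (-(((2*K+2)/2^k) • ((1:R) - p t))) ≤ (2*K+2)/2^k := by
        rw [ouNorm_neg (S.A.smul_mem _ hqmem)]
        apply ouNorm_le_of_bounds (S.A.smul_mem _ hqmem)
        · have hnn1 : S.nn (((2*K+2)/2^k) • ((1:R) - p t)) :=
            nn_smul (hmesh_nn k) hqmem (nn_proj hq't)
          have hnn2 : S.le ((-((2*K+2)/2^k)) • (1:R)) 0 := by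
            rw [le_zero_iff_nn_neg (smul_one_mem _)]
            rw [show -((-((2*K+2)/2^k)) • (1:R)) = ((2*K+2)/2^k) • (1:R) by
              rw [neg_smul, neg_neg]]
            exact nn_smul_one (hmesh_nn k)
          exact S.le_trans _ (smul_one_mem _) _ S.A.zero_mem _ (S.A.smul_mem _ hqmem) hnn2 hnn1
        · exact smul_le_smul (hmesh_nn k) hqmem S.one_mem (proj_le_one hq't)
      calc ouNorm S.le ((a - L k) * ((1:R) - p t) + (-(((2*K+2)/2^k) • ((1:R) - p t))))
          ≤ ouNorm S.le ((a - L k) * ((1:R) - p t))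
            + ouNorm S.le (-(((2*K+2)/2^k) • ((1:R) - p t))) :=
          ouNorm_triangle (mul_mem_of_comm (S.A.sub_mem ha (hLmem k)) hqmem (by
            rw [sub_mul a (L k) ((1:R) - p t), hacomm', hLcomm' k, ← mul_sub]))
            (S.A.neg_mem (S.A.smul_mem _ hqmem))
        _ ≤ ouNorm S.le (a - L k) + (2*K+2)/2^k := add_le_add h1 h2
    · have := hconv.add (mesh_tendsto K)
      simpa using this
  have hnorm : ouNorm S.le a ≤ K := by
    apply le_of_forall_pos_le_add
    intro ε hε
    have h1 : ∀ᶠ k in Filter.atTop, ouNorm S.le (a - L k) < ε/2 :=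
      hconv.eventually (eventually_lt_nhds (by linarith))
    have h2 : ∀ᶠ k in Filter.atTop, (2*K+2)/2^k < ε/2 :=
      (mesh_tendsto K).eventually (eventually_lt_nhds (by linarith))
    obtain ⟨k, hk1, hk2⟩ := (h1.and h2).exists
    have h3 : ouNorm S.le a ≤ ouNorm S.le (a - L k) + ouNorm S.le (L k) := by
      have e : a = (a - L k) + L k := by abel
      calc ouNorm S.le a = ouNorm S.le ((a - L k) + L k) := by rw [← e]
        _ ≤ _ := ouNorm_triangle (S.A.sub_mem ha (hLmem k)) (hLmem k)
    have h4 : ouNorm S.le (L k) ≤ K + (2*K+2)/2^k := RS_norm_le hp (hmesh_nn k) (hvalid k)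
    linarith
  exact ⟨a, ha, hacomm, hub, hlb, hnorm, hconv⟩

end SynapticAlgebra
/-- In a Banach synaptic algebra, the Riemann–Stieltjes sums for
`∫_{−K}^{K} λ dp_λ` attached to a bounded resolution of identity `(p_λ)` converge in norm
to an element `a ∈ A` with `‖a‖ ≤ K` whose spectral resolution is `(p_λ)`. -/
theorem boundedResId_integral {R : Type*} [Ring R] [Algebra ℝ R]
    (S : SynapticAlgebra R) (hB : S.IsBanach) (p : ℝ → R) (K : ℝ)
    (hp : S.IsBoundedResId p K) :
    ∃ a ∈ S.A, ouNorm S.le a ≤ K ∧ (∀ l : ℝ, S.specProj a l = p l) ∧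
      ∀ ε : ℝ, 0 < ε → ∃ δ : ℝ, 0 < δ ∧
        ∀ (n : ℕ) (μ γ : ℕ → ℝ), 0 < n →
          μ 0 < -K → K ≤ μ n →
          (∀ i < n, μ i < μ (i + 1)) →
          (∀ i < n, μ (i + 1) - μ i < δ) →
          (∀ i < n, μ i ≤ γ i ∧ γ i ≤ μ (i + 1)) →
          ouNorm S.le (a - ∑ i ∈ Finset.range n, γ i • (p (μ (i + 1)) - p (μ i))) < ε := by
  obtain ⟨a, ha, hacomm, hub, hlb, hnorm, hconv⟩ := SynapticAlgebra.exists_limit hB hp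
  refine ⟨a, ha, hnorm, SynapticAlgebra.specProj_eq hp ha hacomm hub hlb, ?_⟩
  intro ε hε
  refine ⟨ε/4, by linarith, ?_⟩
  intro n μ γ hn h0 hKn hm hmesh htag
  have hP : SynapticAlgebra.ValidPart K (ε/4) μ γ n :=
    ⟨hn, h0, hKn, hm, fun i hi => le_of_lt (hmesh i hi), htag⟩
  have h1 : ∀ᶠ k in Filter.atTop,
      ouNorm S.le (a - SynapticAlgebra.RS S p (SynapticAlgebra.grid K k) (SynapticAlgebra.grid K k) (2 ^ k)) < ε/4 :=
    hconv.eventually (eventually_lt_nhds (by linarith))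
  have h2 : ∀ᶠ k in Filter.atTop, (2*K+2)/2^k < ε/4 :=
    (SynapticAlgebra.mesh_tendsto K).eventually (eventually_lt_nhds (by linarith))
  obtain ⟨k, hk1, hk2⟩ := (h1.and h2).exists
  have hd : ouNorm S.le (SynapticAlgebra.RS S p (SynapticAlgebra.grid K k) (SynapticAlgebra.grid K k) (2 ^ k) - SynapticAlgebra.RS S p μ γ n)
      ≤ (2*K+2)/2^k + ε/4 := SynapticAlgebra.RS_sub_RS_bounds hp (SynapticAlgebra.grid_valid hp.1 k) hP
  have hRSmem : SynapticAlgebra.RS S p μ γ n ∈ S.A := SynapticAlgebra.RS_mem hp μ γ n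
  have hLmem : SynapticAlgebra.RS S p (SynapticAlgebra.grid K k) (SynapticAlgebra.grid K k) (2 ^ k) ∈ S.A := SynapticAlgebra.RS_mem hp _ _ _
  have htri : ouNorm S.le (a - SynapticAlgebra.RS S p μ γ n)
      ≤ ouNorm S.le (a - SynapticAlgebra.RS S p (SynapticAlgebra.grid K k) (SynapticAlgebra.grid K k) (2 ^ k))
        + ouNorm S.le (SynapticAlgebra.RS S p (SynapticAlgebra.grid K k) (SynapticAlgebra.grid K k) (2 ^ k) - SynapticAlgebra.RS S p μ γ n) := by
    have e : a - SynapticAlgebra.RS S p μ γ n = (a - SynapticAlgebra.RS S p (SynapticAlgebra.grid K k) (SynapticAlgebra.grid K k) (2 ^ k))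
        + (SynapticAlgebra.RS S p (SynapticAlgebra.grid K k) (SynapticAlgebra.grid K k) (2 ^ k) - SynapticAlgebra.RS S p μ γ n) := by abel
    rw [e]
    exact SynapticAlgebra.ouNorm_triangle (S.A.sub_mem ha hLmem) (S.A.sub_mem hLmem hRSmem)
  have : ouNorm S.le (a - SynapticAlgebra.RS S p μ γ n) < ε := by linarith
  exact this
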